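/- arXiv:1412.6908 — 4 statements merged into one kernel-verified Lean document; each statement's English description precedes it below -/
import Mathlib

section
/- If φ : F_n → F_n is a 1-generator endomorphism of the free group F_n of finite rank n (i.e., φ fixes all but possibly one element of some free basis of F_n), then the image φ(F_n) is an echelon subgroup of F_n. -/
/-- The rank of a subgroup: the minimal cardinality of a generating set.
For subgroups of free groups (which are free by Nielsen–Schreier) this is the
cardinality of a free basis. -/
noncomputable def rk {G : Type*} [Group G] (H : Subgroup G) : Cardinal :=
  ⨅ S : {S : Set G // Subgroup.closure S = H}, Cardinal.mk S.1

/-- A subgroup `H` is inert if `rk (H ⊓ K) ≤ rk K` for every finitely generated `K`. -/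
def IsInert {G : Type*} [Group G] (H : Subgroup G) : Prop :=
  ∀ K : Subgroup G, K.FG → rk (H ⊓ K) ≤ rk K

/-- `stage x i` is the subgroup generated by the first `i` elements of `x`. -/
def stage {n : ℕ} {F : Type*} [Group F] (x : Fin n → F) (i : ℕ) : Subgroup F :=
  Subgroup.closure (x '' {j | (j : ℕ) < i})

/-- `x` is an ordered free basis of `F`. -/
def IsOrderedBasis {n : ℕ} {F : Type*} [Group F] (x : Fin n → F) : Prop :=
  Function.Bijective (FreeGroup.lift x)

/-- `H` is in echelon form with respect to the ordered basis `x`: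
`rk (H ⊓ F_i) ≤ rk (H ⊓ F_{i-1}) + 1` for `i = 1, …, n`. -/
def InEchelonForm {n : ℕ} {F : Type*} [Group F] (x : Fin n → F) (H : Subgroup F) : Prop :=
  ∀ i : ℕ, i < n → rk (H ⊓ stage x (i + 1)) ≤ rk (H ⊓ stage x i) + 1

/-- `H` is an echelon subgroup: it is in echelon form with respect to
some ordered free basis. -/
def IsEchelon {n : ℕ} (H : Subgroup (FreeGroup (Fin n))) : Prop :=
  ∃ x : Fin n → FreeGroup (Fin n), IsOrderedBasis x ∧ InEchelonForm x H

/-- A 1-generator (subgroup) endomorphism: an endomorphism fixing all but (possibly)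
one member of some set of free generators. -/
def IsOneGenEndo {G : Type*} [Group G] (φ : G →* G) : Prop :=
  ∃ (ι : Type) (b : FreeGroupBasis ι G) (s : Set ι),
    s.Subsingleton ∧ ∀ i ∉ s, φ (b i) = b i

/-- The subgroup of points fixed by an endomorphism. -/
def fixedSubgroup {G : Type*} [Group G] (φ : G →* G) : Subgroup G where
  carrier := {g | φ g = g}
  one_mem' := by simp
  mul_mem' := by intro a b ha hb; simp only [Set.mem_setOf_eq, map_mul] at *; rw [ha, hb]
  inv_mem' := by intro a ha; simp only [Set.mem_setOf_eq, map_inv] at *; rw [ha]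

/-- An element is primitive if it belongs to some free basis. -/
def IsPrimitive {n : ℕ} (g : FreeGroup (Fin n)) : Prop :=
  ∃ x : Fin n → FreeGroup (Fin n), IsOrderedBasis x ∧ ∃ j, x j = g


section Aux

open Subgroup Cardinal

/-- The rank of a closure is at most the cardinality of the generating set. -/
lemma rk_closure_le_mk {G : Type*} [Group G] (S : Set G) :
    rk (Subgroup.closure S) ≤ Cardinal.mk S :=
  ciInf_le (OrderBot.bddBelow _)
    (⟨S, rfl⟩ : {T : Set G // Subgroup.closure T = Subgroup.closure S})

/-- The infimum defining `rk` is attained. -/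
lemma rk_exists {G : Type*} [Group G] (H : Subgroup G) :
    ∃ S : Set G, Subgroup.closure S = H ∧ Cardinal.mk S = rk H := by
  have hne : Nonempty {S : Set G // Subgroup.closure S = H} := ⟨⟨H, Subgroup.closure_eq H⟩⟩
  have hmem : rk H ∈ Set.range fun S : {S : Set G // Subgroup.closure S = H} =>
      Cardinal.mk S.1 := by
    have := csInf_mem (Set.range_nonempty
      (fun S : {S : Set G // Subgroup.closure S = H} => Cardinal.mk S.1))
    rwa [sInf_range] at this
  obtain ⟨S, hS⟩ := hmem
  exact ⟨S.1, S.2, hS⟩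

/-- Adding one generator increases the rank by at most one. -/
lemma rk_closure_insert {G : Type*} [Group G] (a : G) (S : Set G) :
    rk (Subgroup.closure (insert a S)) ≤ rk (Subgroup.closure S) + 1 := by
  obtain ⟨T, hT, hcard⟩ := rk_exists (Subgroup.closure S)
  have h1 : Subgroup.closure (insert a T) = Subgroup.closure (insert a S) := by
    rw [Set.insert_eq, Set.insert_eq, Subgroup.closure_union, Subgroup.closure_union, hT]
  calc rk (Subgroup.closure (insert a S)) = rk (Subgroup.closure (insert a T)) := by rw [h1]
    _ ≤ Cardinal.mk (insert a T : Set G) := rk_closure_le_mk _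
    _ ≤ Cardinal.mk T + 1 := Cardinal.mk_insert_le
    _ = rk (Subgroup.closure S) + 1 := by rw [hcard]

/-- Rank invariance for free groups: a basis of `FreeGroup (Fin n)` has `n` elements. -/
lemma basis_equiv_fin {n : ℕ} {ι : Type} (b : FreeGroupBasis ι (FreeGroup (Fin n))) :
    Nonempty (ι ≃ Fin n) := by
  set H := Multiplicative (ZMod 2) with hH
  have e : (ι → H) ≃ (Fin n → H) := b.lift.trans FreeGroup.lift.symm
  have hmkH : Cardinal.mk H = 2 := by
    simp [hH, Cardinal.mk_fintype]
  have hcard : (2 : Cardinal) ^ (Cardinal.mk ι) = 2 ^ (n : Cardinal) := by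
    have := Cardinal.mk_congr e
    rwa [← Cardinal.power_def, ← Cardinal.power_def, hmkH, Cardinal.mk_fin] at this
  have hlt : Cardinal.mk ι < Cardinal.aleph0 := by
    by_contra hge
    push_neg at hge
    have h1 : Cardinal.mk ι ≤ 2 ^ (Cardinal.mk ι) := (Cardinal.cantor _).le
    have h2 : (2 : Cardinal) ^ (n : Cardinal) < Cardinal.aleph0 := by
      have : (2 : Cardinal) ^ (n : Cardinal) = ((2 ^ n : ℕ) : Cardinal) := by push_cast; rfl
      rw [this]
      exact Cardinal.nat_lt_aleph0 _
    rw [hcard] at h1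
    exact absurd (lt_of_le_of_lt (le_trans hge h1) h2) (lt_irrefl _)
  obtain ⟨m, hm⟩ := Cardinal.lt_aleph0.mp hlt
  have hmn : m = n := by
    rw [hm] at hcard
    have hc : ((2 ^ m : ℕ) : Cardinal) = ((2 ^ n : ℕ) : Cardinal) := by push_cast; exact hcard
    exact Nat.pow_right_injective (le_refl 2) (Nat.cast_injective hc)
  have : Cardinal.mk ι = Cardinal.mk (Fin n) := by rw [hm, hmn, Cardinal.mk_fin]
  exact Cardinal.eq.mp this

/-- A basis function is an ordered basis. -/
lemma freeGroupBasis_isOrderedBasis {n : ℕ} {F : Type*} [Group F]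
    (c : FreeGroupBasis (Fin n) F) : IsOrderedBasis ⇑c := by
  have h : FreeGroup.lift ⇑c = (c.repr.symm : FreeGroup (Fin n) →* F) := by
    ext j
    simp only [FreeGroup.lift_apply_of]
    rfl
  unfold IsOrderedBasis
  rw [h]
  exact c.repr.symm.bijective

/-- Common core: if `φ` fixes the first `n-1` elements of an ordered basis then
its range is in echelon form with respect to that basis. -/
lemma echelon_aux {n : ℕ} (φ : FreeGroup (Fin n) →* FreeGroup (Fin n))
    (x : Fin n → FreeGroup (Fin n)) (hx : IsOrderedBasis x)
    (hfix : ∀ j : Fin n, (j : ℕ) + 1 < n → φ (x j) = x j) :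
    InEchelonForm x φ.range := by
  have hxtop : Subgroup.closure (Set.range x) = ⊤ := by
    rw [← FreeGroup.range_lift_eq_closure]
    exact MonoidHom.range_eq_top.mpr hx.2
  -- generators with small index lie in the range
  have hmem : ∀ j : Fin n, (j : ℕ) + 1 < n → x j ∈ φ.range := fun j hj => ⟨x j, hfix j hj⟩
  have hstage_le : ∀ i : ℕ, i + 1 ≤ n → stage x i ≤ φ.range := by
    intro i hi
    rw [stage, Subgroup.closure_le]
    rintro g ⟨j, hj, rfl⟩
    have hj' : (j : ℕ) < i := hj
    exact hmem j (by omega)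
  have hinsert : ∀ i : ℕ, ∀ hi : i < n,
      (x '' {j : Fin n | (j : ℕ) < i + 1}) = insert (x ⟨i, hi⟩) (x '' {j : Fin n | (j : ℕ) < i}) := by
    intro i hi
    ext g
    constructor
    · rintro ⟨j, hj, rfl⟩
      have hj' : (j : ℕ) < i + 1 := hj
      rcases Nat.lt_or_ge (j : ℕ) i with h | h
      · exact Set.mem_insert_of_mem _ ⟨j, h, rfl⟩
      · have : (j : ℕ) = i := by omega
        have hji : j = ⟨i, hi⟩ := Fin.ext this
        rw [hji]
        exact Set.mem_insert _ _
    · rintro (rfl | ⟨j, hj, rfl⟩)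
      · exact ⟨⟨i, hi⟩, by simp, rfl⟩
      · have hj' : (j : ℕ) < i := hj
        exact ⟨j, show (j : ℕ) < i + 1 by omega, rfl⟩
  intro i hi
  rcases Nat.lt_or_ge (i + 1) n with hlt | hge
  · -- both stages are contained in the range
    have h1 : φ.range ⊓ stage x (i + 1) = stage x (i + 1) :=
      inf_eq_right.mpr (hstage_le (i + 1) (by omega))
    have h2 : φ.range ⊓ stage x i = stage x i :=
      inf_eq_right.mpr (hstage_le i (by omega))
    rw [h1, h2, stage, stage, hinsert i hi]
    exact rk_closure_insert _ _
  · -- i + 1 = n : the last step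
    have hin : i + 1 = n := by omega
    have htop : stage x (i + 1) = ⊤ := by
      rw [stage, ← hxtop]
      congr 1
      have : {j : Fin n | (j : ℕ) < i + 1} = Set.univ := by
        ext j; simp [hin, j.isLt]
      rw [this, Set.image_univ]
    have hrange : φ.range = Subgroup.closure
        (insert (φ (x ⟨i, hi⟩)) (x '' {j : Fin n | (j : ℕ) < i})) := by
      rw [MonoidHom.range_eq_map, ← hxtop, MonoidHom.map_closure]
      congr 1
      ext g
      constructor
      · rintro ⟨_, ⟨j, rfl⟩, rfl⟩
        rcases Nat.lt_or_ge (j : ℕ) i with h | h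
        · refine Set.mem_insert_of_mem _ ⟨j, h, ?_⟩
          exact (hfix j (by omega)).symm
        · have : (j : ℕ) = i := by omega
          have hji : j = ⟨i, hi⟩ := Fin.ext this
          rw [hji]
          exact Set.mem_insert _ _
      · rintro (rfl | ⟨j, hj, rfl⟩)
        · exact ⟨x ⟨i, hi⟩, ⟨⟨i, hi⟩, rfl⟩, rfl⟩
        · have hj' : (j : ℕ) < i := hj
          exact ⟨x j, ⟨j, rfl⟩, hfix j (by omega)⟩
    have h2 : φ.range ⊓ stage x i = stage x i :=
      inf_eq_right.mpr (hstage_le i (by omega))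
    rw [htop, inf_top_eq, h2, hrange, stage]
    exact rk_closure_insert _ _

end Aux

/-- The image of a 1-generator endomorphism of `F_n` is an echelon subgroup of `F_n`. -/
theorem oneGenEndo_range_isEchelon (n : ℕ) (φ : FreeGroup (Fin n) →* FreeGroup (Fin n))
    (hφ : IsOneGenEndo φ) : IsEchelon φ.range := by
  classical
  obtain ⟨ι, b, s, hs, hfix⟩ := hφ
  obtain ⟨e0⟩ := basis_equiv_fin b
  -- choose an equiv sending the (at most one) moved generator to the last index
  obtain ⟨e, he⟩ : ∃ e : ι ≃ Fin n, ∀ j : Fin n, (j : ℕ) + 1 < n → e.symm j ∉ s := by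
    rcases Set.eq_empty_or_nonempty s with hse | ⟨i0, hi0⟩
    · exact ⟨e0, fun j _ => by simp [hse]⟩
    · have hn : 0 < n := (e0 i0).pos
      refine ⟨e0.trans (Equiv.swap (e0 i0) ⟨n - 1, by omega⟩), fun j hj hjs => ?_⟩
      set e := e0.trans (Equiv.swap (e0 i0) ⟨n - 1, by omega⟩) with hedef
      have : e.symm j = i0 := hs hjs hi0
      have : j = e i0 := by rw [← this, Equiv.apply_symm_apply]
      have he_i0 : e i0 = ⟨n - 1, by omega⟩ := by
        simp [hedef, Equiv.swap_apply_left]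
      rw [he_i0] at this
      have hj1 : (j : ℕ) = n - 1 := by rw [this]
      omega
  set x : Fin n → FreeGroup (Fin n) := ⇑(b.reindex e) with hxdef
  have hxbasis : IsOrderedBasis x := freeGroupBasis_isOrderedBasis (b.reindex e)
  have hfix' : ∀ j : Fin n, (j : ℕ) + 1 < n → φ (x j) = x j := by
    intro j hj
    have : x j = b (e.symm j) := rfl
    rw [this]
    exact hfix _ (he j hj)
  exact ⟨x, hxbasis, echelon_aux φ x hxbasis hfix'⟩
end

section
/- Let F_n be a free group of finite rank n with 1 < n < ∞. If H is an echelon subgroup of F_n of finite index in F_n, then H = F_n. -/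
section Cocycles

variable {Γ : Type*} [Group Γ] {G : Type*} [CommGroup G]

/-- The basepoint of the coset space. -/
def bpt (H : Subgroup Γ) : Γ ⧸ H := QuotientGroup.mk 1

lemma mk_eq_bpt_iff {H : Subgroup Γ} {a : Γ} : QuotientGroup.mk a = bpt H ↔ a ∈ H := by
  rw [bpt, QuotientGroup.eq]
  simp

/-- Crossed homomorphisms `Γ → Maps(Γ⧸H, G)` (with the left translation action),
written pointwise. -/
def Coc (H : Subgroup Γ) (G : Type*) [CommGroup G] : Type _ :=
  {f : Γ → (Γ ⧸ H) → G // ∀ a b x, f (a * b) x = f a x * f b (a⁻¹ • x)}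

variable {H : Subgroup Γ}

lemma coc_one (f : Coc H G) (x : Γ ⧸ H) : f.1 1 x = 1 := by
  have h := f.2 1 1 x
  rw [one_mul, inv_one, one_smul] at h
  exact (left_eq_mul.mp h)

lemma coc_inv (f : Coc H G) (a : Γ) (x : Γ ⧸ H) : f.1 a⁻¹ x = (f.1 a (a • x))⁻¹ := by
  have h := f.2 a a⁻¹ (a • x)
  rw [mul_inv_cancel, inv_smul_smul, coc_one] at h
  exact eq_inv_of_mul_eq_one_right h.symm

lemma smul_bpt (g : Γ) : g • bpt H = QuotientGroup.mk g := by
  show g • (QuotientGroup.mk 1 : Γ ⧸ H) = _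
  rw [MulAction.Quotient.smul_mk, smul_eq_mul, mul_one]

/-- A normalized transversal for `Γ ⧸ H`. -/
noncomputable def transv (H : Subgroup Γ) (x : Γ ⧸ H) : Γ :=
  x.out * ((bpt H).out)⁻¹

lemma transv_smul (x : Γ ⧸ H) : transv H x • bpt H = x := by
  rw [smul_bpt, transv]
  have h1 : ((bpt H).out)⁻¹ ∈ H := by
    apply H.inv_mem
    rw [← mk_eq_bpt_iff, QuotientGroup.out_eq']
  rw [QuotientGroup.mk_mul_of_mem _ h1, QuotientGroup.out_eq']

lemma transv_one : transv H (bpt H) = 1 := by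
  rw [transv, mul_inv_cancel]

lemma transv_inv_smul (x : Γ ⧸ H) : (transv H x)⁻¹ • x = bpt H := by
  rw [inv_smul_eq_iff, transv_smul]

lemma transv_mem (γ : Γ) (x : Γ ⧸ H) :
    (transv H x)⁻¹ * γ * transv H (γ⁻¹ • x) ∈ H := by
  rw [← mk_eq_bpt_iff, ← smul_bpt, mul_smul, mul_smul,
    transv_smul, smul_inv_smul, transv_inv_smul]

/-- The subgroup element `τ(x)⁻¹ γ τ(γ⁻¹ • x)`. -/
noncomputable def transl (γ : Γ) (x : Γ ⧸ H) : ↥H :=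
  ⟨(transv H x)⁻¹ * γ * transv H (γ⁻¹ • x), transv_mem γ x⟩

lemma H_smul_bpt (h : ↥H) : (h : Γ) • bpt H = bpt H := by
  rw [smul_bpt, mk_eq_bpt_iff]; exact h.2

lemma H_inv_smul_bpt (h : ↥H) : (h : Γ)⁻¹ • bpt H = bpt H := by
  rw [smul_bpt, mk_eq_bpt_iff]; exact H.inv_mem h.2

/-- The key bijection: cocycles correspond to a homomorphism `H →* G` together
with a normalized function `Γ⧸H → G`. -/
noncomputable def cocEquivB :
    Coc H G ≃ ((↥H →* G) × {t : (Γ ⧸ H) → G // t (bpt H) = 1}) where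
  toFun f :=
    ({ toFun := fun h => f.1 h.1 (bpt H)
       map_one' := coc_one f (bpt H)
       map_mul' := fun h1 h2 => by
         have h := f.2 h1.1 h2.1 (bpt H)
         rwa [H_inv_smul_bpt h1] at h },
     ⟨fun x => f.1 (transv H x) x, by
       show f.1 (transv H (bpt H)) (bpt H) = 1
       rw [transv_one]; exact coc_one f (bpt H)⟩)
  invFun p :=
    ⟨fun γ x => p.2.1 x * p.1 (transl γ x) * (p.2.1 (γ⁻¹ • x))⁻¹, by
      intro a b x
      have key : transl (a * b) x = transl a x * transl b (a⁻¹ • x) := by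
        apply Subtype.ext
        show _ = ((transv H x)⁻¹ * a * transv H (a⁻¹ • x)) *
          ((transv H (a⁻¹ • x))⁻¹ * b * transv H (b⁻¹ • a⁻¹ • x))
        show (transv H x)⁻¹ * (a * b) * transv H ((a * b)⁻¹ • x) = _
        rw [mul_inv_rev, mul_smul]
        group
      show p.2.1 x * p.1 (transl (a * b) x) * (p.2.1 ((a * b)⁻¹ • x))⁻¹ = _
      rw [key, map_mul, mul_inv_rev, mul_smul]
      show _ = (p.2.1 x * p.1 (transl a x) * (p.2.1 (a⁻¹ • x))⁻¹) *
        (p.2.1 (a⁻¹ • x) * p.1 (transl b (a⁻¹ • x)) * (p.2.1 (b⁻¹ • a⁻¹ • x))⁻¹)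
      group⟩
  left_inv f := by
    apply Subtype.ext
    funext γ x
    show f.1 (transv H x) x * f.1 ((transl γ x : Γ)) (bpt H)
        * (f.1 (transv H (γ⁻¹ • x)) (γ⁻¹ • x))⁻¹ = f.1 γ x
    have hdec : γ = transv H x * ((transl γ x : Γ) * (transv H (γ⁻¹ • x))⁻¹) := by
      show γ = transv H x * ((transv H x)⁻¹ * γ * transv H (γ⁻¹ • x) * (transv H (γ⁻¹ • x))⁻¹)
      group
    conv_rhs => rw [hdec]
    rw [f.2, f.2, transv_inv_smul, coc_inv, H_inv_smul_bpt, transv_smul, mul_assoc]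
  right_inv p := by
    obtain ⟨ρ, t⟩ := p
    refine Prod.ext ?_ ?_
    · apply MonoidHom.ext
      intro h
      show t.1 (bpt H) * ρ (transl h.1 (bpt H)) * (t.1 ((h.1)⁻¹ • bpt H))⁻¹ = ρ h
      have h1 : transl (h.1) (bpt H) = h := by
        apply Subtype.ext
        show (transv H (bpt H))⁻¹ * h.1 * transv H ((h.1)⁻¹ • bpt H) = h.1
        rw [H_inv_smul_bpt h, transv_one]
        group
      rw [h1, H_inv_smul_bpt h, t.2]
      group
    · apply Subtype.ext
      funext x
      show t.1 x * ρ (transl (transv H x) x) * (t.1 ((transv H x)⁻¹ • x))⁻¹ = t.1 x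
      have h1 : transl (transv H x) x = 1 := by
        apply Subtype.ext
        show (transv H x)⁻¹ * transv H x * transv H ((transv H x)⁻¹ • x) = 1
        rw [transv_inv_smul, transv_one]
        group
      rw [h1, map_one, transv_inv_smul, t.2]
      group

end Cocycles

section CocFree

variable {α : Type*} {G : Type*} [CommGroup G]

/-- The translation action of the free group on `Maps(Γ⧸H, G)`. -/
def actHom (H : Subgroup (FreeGroup α)) (G : Type*) [CommGroup G] :
    FreeGroup α →* MulAut ((FreeGroup α ⧸ H) → G) where
  toFun g :=
    { toFun := fun m x => m (g⁻¹ • x)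
      invFun := fun m x => m (g • x)
      left_inv := fun m => by funext x; simp
      right_inv := fun m => by funext x; simp
      map_mul' := fun m1 m2 => rfl }
  map_one' := by
    apply MulEquiv.ext
    intro m
    funext x
    show m ((1:FreeGroup α)⁻¹ • x) = m x
    rw [inv_one, one_smul]
  map_mul' := fun a b => by
    apply MulEquiv.ext
    intro m
    funext x
    show m ((a * b)⁻¹ • x) = m (b⁻¹ • a⁻¹ • x)
    rw [mul_inv_rev, mul_smul]

/-- The lifted homomorphism into the semidirect product. -/
noncomputable def sdpLift (H : Subgroup (FreeGroup α)) (v : α → (FreeGroup α ⧸ H) → G) :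
    FreeGroup α →* ((FreeGroup α ⧸ H) → G) ⋊[actHom H G] FreeGroup α :=
  FreeGroup.lift (fun i => ⟨v i, FreeGroup.of i⟩)

lemma sdpLift_right (H : Subgroup (FreeGroup α)) (v : α → (FreeGroup α ⧸ H) → G)
    (γ : FreeGroup α) : (sdpLift H v γ).right = γ := by
  have h : SemidirectProduct.rightHom.comp (sdpLift H v) = MonoidHom.id _ := by
    apply FreeGroup.ext_hom
    intro a
    simp [sdpLift]
  exact DFunLike.congr_fun h γ

/-- Cocycles on a free group are freely determined by their values on generators. -/
noncomputable def cocEquivA (H : Subgroup (FreeGroup α)) :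
    Coc H G ≃ (α → (FreeGroup α ⧸ H) → G) where
  toFun f := fun i => f.1 (FreeGroup.of i)
  invFun v :=
    ⟨fun γ => (sdpLift H v γ).left, by
      intro a b x
      have h := congrArg SemidirectProduct.left (map_mul (sdpLift H v) a b)
      rw [SemidirectProduct.mul_left, sdpLift_right] at h
      exact congrFun h x⟩
  left_inv f := by
    apply Subtype.ext
    funext γ
    show (sdpLift H (fun i => f.1 (FreeGroup.of i)) γ).left = f.1 γ
    have key : sdpLift H (fun i => f.1 (FreeGroup.of i)) =
        { toFun := fun γ => (⟨f.1 γ, γ⟩ : ((FreeGroup α ⧸ H) → G) ⋊[actHom H G] FreeGroup α)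
          map_one' := by
            apply SemidirectProduct.ext
            · show f.1 1 = 1
              funext x
              exact coc_one f x
            · rfl
          map_mul' := fun a b => by
            apply SemidirectProduct.ext
            · show f.1 (a * b) = f.1 a * actHom H G a (f.1 b)
              funext x
              exact f.2 a b x
            · rfl } := by
      apply FreeGroup.ext_hom
      intro a
      simp [sdpLift]
    rw [key]
    rfl
  right_inv v := by
    funext i
    show (sdpLift H v (FreeGroup.of i)).left = v i
    rw [sdpLift, FreeGroup.lift_apply_of]

end CocFree

section Pin

open Classical in
/-- Functions pinned at a point are equivalent to functions off the point. -/
noncomputable def pinEquiv {X : Type*} (x0 : X) (G : Type*) [One G] :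
    {t : X → G // t x0 = 1} ≃ ({x : X // x ≠ x0} → G) where
  toFun t x := t.1 x.1
  invFun u := ⟨fun x => if h : x = x0 then 1 else u ⟨x, h⟩, by simp⟩
  left_inv t := by
    apply Subtype.ext
    funext x
    by_cases h : x = x0
    · subst h; simpa using t.2.symm
    · simp [h]
  right_inv u := by
    funext x
    simp [x.2]

end Pin

section Count

local notation "G2" => Multiplicative (ZMod 2)

lemma cardG2 : Nat.card G2 = 2 := by
  simp [Nat.card_eq_fintype_card]

/-- The key counting inequality: if the finite set `S` generates a finite-index
subgroup of the free group on `α`, then `|Γ:H| * |α| + 1 ≤ |S| + |Γ:H|`. -/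
theorem index_mul_le {α : Type*} [Finite α] (S : Set (FreeGroup α)) (hSfin : S.Finite)
    (hfin : (Subgroup.closure S).index ≠ 0) :
    (Subgroup.closure S).index * Nat.card α + 1 ≤
      Nat.card S + (Subgroup.closure S).index := by
  set H := Subgroup.closure S with hH
  set X := FreeGroup α ⧸ H
  have hXfin : Finite X := by
    apply Nat.finite_of_card_ne_zero
    rwa [← Subgroup.index_eq_card]
  haveI : Finite ↥S := hSfin
  -- count the Hom-set
  have hominj : Function.Injective
      (fun (ρ : ↥H →* G2) (s : ↥S) => ρ ⟨s.1, Subgroup.subset_closure s.2⟩) := by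
    intro ρ1 ρ2 h
    apply MonoidHom.eq_of_eqOn_dense (Subgroup.closure_preimage_eq_top S)
    intro y hy
    have : (⟨y.1, Subgroup.subset_closure hy⟩ : ↥H) = y := Subtype.ext rfl
    calc ρ1 y = ρ1 ⟨y.1, Subgroup.subset_closure hy⟩ := by rw [this]
    _ = ρ2 ⟨y.1, Subgroup.subset_closure hy⟩ := congrFun h ⟨y.1, hy⟩
    _ = ρ2 y := by rw [this]
  have homle : Nat.card (↥H →* G2) ≤ 2 ^ Nat.card ↥S := by
    calc Nat.card (↥H →* G2) ≤ Nat.card (↥S → G2) := Nat.card_le_card_of_injective _ hominj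
    _ = 2 ^ Nat.card ↥S := by rw [Nat.card_fun, cardG2]
  -- the two counts of cocycles
  have c1 : Nat.card (Coc H G2) = (2 ^ (Nat.card X)) ^ Nat.card α := by
    rw [Nat.card_congr (cocEquivA (G := G2) H), Nat.card_fun, Nat.card_fun, cardG2]
  haveI : Unique {x : X // x = bpt H} :=
    ⟨⟨⟨bpt H, rfl⟩⟩, fun y => Subtype.ext y.2⟩
  have hXcardEq : Nat.card X = Nat.card {x : X // x ≠ bpt H} + 1 := by
    calc Nat.card X = Nat.card ({x : X // x = bpt H} ⊕ {x : X // ¬x = bpt H}) := by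
          classical exact (Nat.card_congr (Equiv.sumCompl (· = bpt H))).symm
    _ = Nat.card {x : X // x ≠ bpt H} + 1 := by
          rw [Nat.card_sum, Nat.card_unique, add_comm]
  have c2 : Nat.card (Coc H G2) =
      Nat.card (↥H →* G2) * 2 ^ (Nat.card {x : X // x ≠ bpt H}) := by
    rw [Nat.card_congr (cocEquivB (G := G2) (H := H)), Nat.card_prod,
      Nat.card_congr (pinEquiv (bpt H) G2), Nat.card_fun, cardG2]
  -- combine
  set j := Nat.card {x : X // x ≠ bpt H}
  have key : 2 ^ ((j + 1) * Nat.card α) ≤ 2 ^ (Nat.card ↥S + j) := by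
    calc 2 ^ ((j + 1) * Nat.card α) = (2 ^ (j + 1)) ^ Nat.card α := by
          rw [pow_mul]
    _ = Nat.card (Coc H G2) := by rw [c1, hXcardEq]
    _ = Nat.card (↥H →* G2) * 2 ^ j := c2
    _ ≤ 2 ^ Nat.card ↥S * 2 ^ j := Nat.mul_le_mul_right _ homle
    _ = 2 ^ (Nat.card ↥S + j) := by rw [pow_add]
  have key2 : (j + 1) * Nat.card α ≤ Nat.card ↥S + j :=
    (Nat.pow_le_pow_iff_right one_lt_two).mp key
  have hidx : H.index = j + 1 := by
    rw [Subgroup.index_eq_card, hXcardEq]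
  rw [hidx]
  omega

end Count


section RkLemmas

variable {Γ : Type*} [Group Γ]

lemma rk_le_of_closure {K : Subgroup Γ} {S : Set Γ} (h : Subgroup.closure S = K) :
    rk K ≤ Cardinal.mk S :=
  ciInf_le' _ (⟨S, h⟩ : {S : Set Γ // Subgroup.closure S = K})

lemma exists_gen (K : Subgroup Γ) :
    ∃ S : Set Γ, Subgroup.closure S = K ∧ Cardinal.mk S = rk K := by
  haveI : Nonempty {S : Set Γ // Subgroup.closure S = K} :=
    ⟨⟨(K : Set Γ), Subgroup.closure_eq K⟩⟩
  have h : rk K ∈ Set.range fun S : {S : Set Γ // Subgroup.closure S = K} =>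
      Cardinal.mk S.1 := csInf_mem (Set.range_nonempty _)
  obtain ⟨⟨S, hS⟩, h⟩ := h
  exact ⟨S, hS, h⟩

end RkLemmas

/-- For `1 < n`, an echelon subgroup of finite index in `F_n` must be `F_n` itself. -/
theorem echelon_finiteIndex_eq_top (n : ℕ) (hn : 1 < n) (H : Subgroup (FreeGroup (Fin n)))
    (hH : IsEchelon H) (hfin : H.index ≠ 0) : H = ⊤ := by
  obtain ⟨x, hx, he⟩ := hH
  -- rk H ≤ n
  have hstage : ∀ i : ℕ, i ≤ n → rk (H ⊓ stage x i) ≤ (i : Cardinal) := by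
    intro i
    induction i with
    | zero =>
      intro _
      have h0 : stage x 0 = ⊥ := by
        rw [stage]
        have : {j : Fin n | (j : ℕ) < 0} = ∅ := by simp
        rw [this, Set.image_empty, Subgroup.closure_empty]
      rw [h0, inf_bot_eq, Nat.cast_zero]
      have := rk_le_of_closure (K := (⊥ : Subgroup (FreeGroup (Fin n))))
        (S := (∅ : Set (FreeGroup (Fin n)))) Subgroup.closure_empty
      simpa using this
    | succ i ih =>
      intro hle
      have h1 := he i (by omega)
      have h2 := ih (by omega)
      calc rk (H ⊓ stage x (i + 1)) ≤ rk (H ⊓ stage x i) + 1 := h1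
      _ ≤ (i : Cardinal) + 1 := add_le_add_left h2 1
      _ = ((i + 1 : ℕ) : Cardinal) := by push_cast; ring
  have htop : stage x n = ⊤ := by
    rw [stage]
    have himg : (x '' {j : Fin n | (j : ℕ) < n}) = Set.range x := by
      have : {j : Fin n | (j : ℕ) < n} = Set.univ := by
        ext j; simp [j.is_lt]
      rw [this, Set.image_univ]
    rw [himg, ← FreeGroup.range_lift_eq_closure]
    exact MonoidHom.range_eq_top_of_surjective _ (Function.Bijective.surjective hx)
  have hrk : rk H ≤ (n : Cardinal) := by
    have := hstage n le_rfl
    rwa [htop, inf_top_eq] at this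
  -- extract a small generating set
  obtain ⟨S, hS, hcard⟩ := exists_gen H
  have hmkS : Cardinal.mk S ≤ (n : Cardinal) := hcard ▸ hrk
  have hSfin : S.Finite := by
    rw [← Set.finite_coe_iff, ← Cardinal.lt_aleph0_iff_finite]
    exact lt_of_le_of_lt hmkS (Cardinal.nat_lt_aleph0 n)
  have hcardS : Nat.card S ≤ n := by
    have := Cardinal.toNat_le_toNat hmkS (Cardinal.nat_lt_aleph0 n)
    rwa [Cardinal.toNat_natCast] at this
  -- apply the counting bound
  have hbound := index_mul_le S hSfin (by rwa [hS])
  rw [hS] at hbound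
  rw [Nat.card_eq_fintype_card, Fintype.card_fin] at hbound
  -- conclude
  have hidx : H.index = 1 := by
    by_contra hne
    have h2 : 2 ≤ H.index := by omega
    have hkn : H.index * n + 1 ≤ n + H.index := by omega
    nlinarith [h2, hn, hkn]
  exact Subgroup.index_eq_one.mp hidx
end

section
/- Let F_3 be the free group with free basis {x, y, z} and let H = ⟨x²y²x², y²z²y², z²x²y²x²z²⟩. Then H is not an echelon subgroup of F_3. -/
/-- The generators of `F_3`. -/
def xx : FreeGroup (Fin 3) := FreeGroup.of 0
def yy : FreeGroup (Fin 3) := FreeGroup.of 1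
def zz : FreeGroup (Fin 3) := FreeGroup.of 2

/-- The subgroup `H = ⟨x²y²x², y²z²y², z²x²y²x²z²⟩` of `F_3`. -/
def Hex : Subgroup (FreeGroup (Fin 3)) :=
  Subgroup.closure {xx^2 * yy^2 * xx^2, yy^2 * zz^2 * yy^2, zz^2 * xx^2 * yy^2 * xx^2 * zz^2}

set_option maxHeartbeats 1000000



namespace NotEchelonAux

abbrev Λ := (Fin 3) × Bool
abbrev F3 := FreeGroup (Fin 3)

def tinv (t : Λ) : Λ := (t.1, !t.2)

def NC (s t : Λ) : Prop := ¬(s.1 = t.1 ∧ s.2 = !t.2)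

instance (s t : Λ) : Decidable (NC s t) := inferInstanceAs (Decidable ¬(s.1 = t.1 ∧ s.2 = !t.2))

lemma NC_self (t : Λ) : NC t t := by simp [NC]

lemma NC_of_ne_tinv {u t : Λ} (h : u ≠ tinv t) : NC u t := by
  intro ⟨h1, h2⟩
  exact h (Prod.ext h1 (by simp [tinv, h2]))

lemma ne_tinv_self (t : Λ) : t ≠ tinv t := by
  intro h
  have := congrArg Prod.snd h
  simp [tinv] at this

inductive Dbl : List Λ → Prop
  | nil : Dbl []
  | cons (t : Λ) {w : List Λ} : Dbl w → Dbl (t :: t :: w)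

lemma Dbl.append {u v : List Λ} (hu : Dbl u) (hv : Dbl v) : Dbl (u ++ v) := by
  induction hu with
  | nil => simpa
  | cons t _ ih => exact Dbl.cons t ih

lemma Dbl.split {w : List Λ} (h : Dbl w) : ∀ {u v : List Λ}, w = u ++ v → Even u.length →
    Dbl u ∧ Dbl v := by
  induction h with
  | nil =>
    intro u v he hu
    rcases List.append_eq_nil_iff.mp he.symm with ⟨rfl, rfl⟩
    exact ⟨Dbl.nil, Dbl.nil⟩
  | cons t hw ih =>
    intro u v he hu
    match u with
    | [] =>
      simp only [List.nil_append] at he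
      exact ⟨Dbl.nil, he ▸ Dbl.cons t hw⟩
    | [a] => simp [Nat.even_add_one] at hu
    | a :: b :: u' =>
      simp only [List.cons_append, List.cons.injEq] at he
      obtain ⟨rfl, rfl, he'⟩ := he
      simp only [List.length_cons] at hu
      have hu' : Even u'.length := by
        rcases Nat.even_or_odd u'.length with h | h
        · exact h
        · exfalso; rw [Nat.even_add_one, Nat.even_add_one] at hu; simp [Nat.not_even_iff_odd.mpr h] at hu
      obtain ⟨d1, d2⟩ := ih he' hu'
      exact ⟨Dbl.cons _ d1, d2⟩

lemma Dbl.getElem {w : List Λ} (h : Dbl w) :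
    ∀ j, j % 2 = 0 → ∀ (hj : j + 1 < w.length), w[j] = w[j+1] := by
  induction h with
  | nil => intro j _ hj; simp at hj
  | @cons t w hw ih =>
    intro j hj2 hj
    match j with
    | 0 => rfl
    | 1 => simp at hj2
    | (j+2) =>
      simp only [List.length_cons] at hj
      have hlt : j + 1 < w.length := by omega
      simpa using ih j (by omega) hlt

lemma Dbl.even_length {w : List Λ} (h : Dbl w) : Even w.length := by
  induction h with
  | nil => simp
  | cons t hw ih => simpa [Nat.even_add_one, Nat.even_add] using ih

/-- `LP n c` : the list `c` repeated `n` times. -/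
def LP : ℕ → List Λ → List Λ
  | 0, _ => []
  | n + 1, c => c ++ LP n c

lemma LP_length (n : ℕ) (c : List Λ) : (LP n c).length = n * c.length := by
  induction n with
  | zero => simp [LP]
  | succ n ih => simp [LP, ih]; ring

lemma LP_two (m : ℕ) (c : List Λ) : LP (2 * m) c = LP m (c ++ c) := by
  induction m with
  | zero => simp [LP]
  | succ m ih =>
    have : 2 * (m + 1) = (2 * m) + 1 + 1 := by ring
    rw [this, LP, LP, ih, LP, List.append_assoc]

lemma LP_rot (n : ℕ) (c₀ : Λ) (c' : List Λ) :
    LP (n + 1) (c₀ :: c') = c₀ :: (LP n (c' ++ [c₀]) ++ c') := by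
  induction n with
  | zero => simp [LP]
  | succ n ih =>
    rw [LP, ih]
    simp only [LP, List.cons_append, List.cons.injEq, true_and]
    simp only [List.append_assoc, List.cons_append, List.nil_append]

end NotEchelonAux
namespace NotEchelonAux

/-- A word is reduced iff adjacent letters never cancel. -/
def Red' (w : List Λ) : Prop := List.IsChain NC w

open FreeGroup

lemma reduce_eq_self_of_red' {w : List Λ} (h : Red' w) : reduce w = w := by
  induction w with
  | nil => rfl
  | cons t w ih =>
    have hw : reduce w = w := ih h.tail
    rw [FreeGroup.reduce.cons, hw]
    cases w with
    | nil => rfl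
    | cons s w' =>
      have hns : NC t s := List.isChain_cons_cons.mp h |>.1
      simp only []
      rw [if_neg hns]

lemma red'_reduce (w : List Λ) : Red' (reduce w) := by
  induction w with
  | nil => exact List.isChain_nil
  | cons t w ih =>
    rw [FreeGroup.reduce.cons]
    cases h : reduce w with
    | nil => exact List.isChain_singleton _
    | cons s w' =>
      rw [h] at ih
      by_cases hc : t.1 = s.1 ∧ t.2 = !s.2
      · simp only [if_pos hc]
        exact ih.tail
      · simp only [if_neg hc]
        exact List.isChain_cons_cons.mpr ⟨hc, ih⟩

lemma red'_toWord (g : F3) : Red' (toWord g) := by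
  have := red'_reduce (toWord g)
  rwa [FreeGroup.reduce_toWord] at this

lemma toWord_mk_of_red' {w : List Λ} (h : Red' w) : (FreeGroup.mk w).toWord = w := by
  rw [FreeGroup.toWord_mk, reduce_eq_self_of_red' h]

lemma invRev_cons (t : Λ) (w : List Λ) :
    FreeGroup.invRev (t :: w) = FreeGroup.invRev w ++ [tinv t] := by
  simp [FreeGroup.invRev, tinv]

lemma invRev_nil : FreeGroup.invRev ([] : List Λ) = [] := rfl

lemma Dbl.invRev {w : List Λ} (h : Dbl w) : Dbl (FreeGroup.invRev w) := by
  induction h with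
  | nil => exact Dbl.nil
  | cons t hw ih =>
    rw [invRev_cons, invRev_cons, List.append_assoc]
    exact ih.append (Dbl.cons (tinv t) Dbl.nil)

lemma Dbl.shape {r : List Λ} (h : Dbl r) : r = [] ∨ ∃ s r', r = s :: s :: r' ∧ Dbl r' := by
  cases h with
  | nil => exact Or.inl rfl
  | cons t hw => exact Or.inr ⟨_, _, rfl, hw⟩

/-- key closure lemma: prepending a doubled word and reducing preserves doubledness -/
lemma Dbl.reduce_append {u v : List Λ} (hu : Dbl u) (hv : reduce v = v) (hdv : Dbl v) :
    Dbl (reduce (u ++ v)) := by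
  induction hu with
  | nil => simpa [hv]
  | @cons t u' _ ih =>
    rw [List.cons_append, List.cons_append, FreeGroup.reduce.cons, FreeGroup.reduce.cons]
    rcases ih.shape with hnil | ⟨s, r', hr, hr'⟩
    · rw [hnil]
      dsimp only
      rw [if_neg (by simp)]
      exact Dbl.cons t Dbl.nil
    · rw [hr]
      dsimp only
      by_cases hc : t.1 = s.1 ∧ t.2 = !s.2
      · rw [if_pos hc]
        dsimp only
        rw [if_pos hc]
        exact hr'
      · rw [if_neg hc]
        dsimp only
        rw [if_neg (by simp)]
        exact Dbl.cons t (Dbl.cons s hr')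

end NotEchelonAux
namespace NotEchelonAux
open FreeGroup

set_option linter.unusedVariables false in
/-- cyclic-reduction decomposition of a word: `w = p ++ c ++ invRev p` with `c` cyclically
reduced. -/
def cyc : List Λ → List Λ × List Λ
  | [] => ([], [])
  | t :: rest =>
    match h : rest.getLast? with
    | none => ([], [t])
    | some u =>
      if u = tinv t then
        ((t :: (cyc rest.dropLast).1), (cyc rest.dropLast).2)
      else ([], t :: rest)
  termination_by w => w.length
  decreasing_by
    simp only [List.length_cons]
    have := List.length_dropLast (xs := rest)
    omega

lemma cyc_nil : cyc [] = ([], []) := by rw [cyc.eq_def]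

lemma cyc_cons_none {t : Λ} {rest : List Λ} (h : rest.getLast? = none) :
    cyc (t :: rest) = ([], [t]) := by
  rw [cyc.eq_def]
  split
  · simp_all
  · split
    · simp_all
    · split <;> simp_all

lemma cyc_cons_pos {t : Λ} {rest : List Λ} (h : rest.getLast? = some (tinv t)) :
    cyc (t :: rest) = ((t :: (cyc rest.dropLast).1), (cyc rest.dropLast).2) := by
  rw [cyc.eq_def]
  split
  · simp_all
  · split
    · simp_all
    · split <;> simp_all

lemma cyc_cons_neg {t u : Λ} {rest : List Λ} (h : rest.getLast? = some u) (hu : u ≠ tinv t) :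
    cyc (t :: rest) = ([], t :: rest) := by
  rw [cyc.eq_def]
  split
  · simp_all
  · split
    · simp_all
    · split <;> simp_all

lemma cyc_spec : ∀ (w : List Λ), w = (cyc w).1 ++ (cyc w).2 ++ invRev (cyc w).1 := by
  intro w
  induction w using cyc.induct with
  | case1 => rw [cyc_nil]; simp [invRev]
  | case2 t rest hlast =>
    rw [cyc_cons_none hlast]
    rw [List.getLast?_eq_none_iff] at hlast
    subst hlast
    simp [invRev]
  | case3 t rest hlast ih =>
    rw [cyc_cons_pos hlast]
    have hrest : rest.dropLast ++ [tinv t] = rest := List.dropLast_append_getLast? _ hlast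
    simp only []
    conv_lhs => rw [← hrest]
    rw [invRev_cons]
    conv_lhs => rw [ih]
    simp [List.append_assoc]
  | case4 t rest u hlast hu =>
    rw [cyc_cons_neg hlast hu]
    simp [invRev]

lemma cyc_cycRed : ∀ (w : List Λ) (u t : Λ), (cyc w).2.getLast? = some u →
    (cyc w).2.head? = some t → NC u t := by
  intro w
  induction w using cyc.induct with
  | case1 =>
    intro u t hu ht
    rw [cyc_nil] at hu
    simp at hu
  | case2 t rest hlast =>
    intro u s hu hs
    rw [cyc_cons_none hlast] at hu hs
    simp at hu hs
    subst hu; subst hs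
    exact NC_self t
  | case3 t rest hlast ih =>
    intro u s hu hs
    rw [cyc_cons_pos hlast] at hu hs
    exact ih u s hu hs
  | case4 t rest u hlast hu =>
    intro u' s hu' hs
    rw [cyc_cons_neg hlast hu] at hu' hs
    have hrest : rest.dropLast ++ [u] = rest := List.dropLast_append_getLast? _ hlast
    have h1 : (t :: rest).getLast? = some u := by
      conv_lhs => rw [← hrest]
      rw [← List.cons_append]
      exact List.getLast?_concat
    rw [h1] at hu'
    simp at hu'
    simp at hs
    subst hu'; subst hs
    exact NC_of_ne_tinv hu

end NotEchelonAux
namespace NotEchelonAux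
open FreeGroup

lemma LP_ne_nil {n : ℕ} {c : List Λ} (hc : c ≠ []) : LP (n + 1) c ≠ [] := by
  rw [LP]
  simp [hc]

lemma LP_head? {n : ℕ} {c : List Λ} (hc : c ≠ []) : (LP (n + 1) c).head? = c.head? := by
  rw [LP, List.head?_append_of_ne_nil _ hc]

lemma LP_getLast? {c : List Λ} (hc : c ≠ []) : ∀ n, (LP (n + 1) c).getLast? = c.getLast? := by
  intro n
  induction n with
  | zero => rw [LP, LP, List.append_nil]
  | succ n ih =>
    rw [LP, List.getLast?_append, ih]
    cases h : c.getLast? with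
    | none => rw [List.getLast?_eq_none_iff] at h; exact absurd h hc
    | some u => rfl

lemma red'_LP {c : List Λ} (hc : c ≠ []) (hred : Red' c)
    (hcyc : ∀ u t, c.getLast? = some u → c.head? = some t → NC u t) :
    ∀ n, Red' (LP n c) := by
  intro n
  induction n with
  | zero => exact List.isChain_nil
  | succ n ih =>
    rw [LP]
    unfold Red' at ih ⊢
    rw [List.isChain_append]
    refine ⟨hred, ih, ?_⟩
    intro x hx y hy
    cases n with
    | zero => rw [LP] at hy; simp at hy
    | succ m =>
      rw [LP_head? hc] at hy
      exact hcyc x y hx hy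

/-- assembling reducedness of `p ++ c^n ++ invRev p` -/
lemma red'_assembled {p c : List Λ} (hw : Red' (p ++ c ++ invRev p)) (hc : c ≠ [])
    (hcyc : ∀ u t, c.getLast? = some u → c.head? = some t → NC u t) (n : ℕ) (hn : 1 ≤ n) :
    Red' (p ++ LP n c ++ invRev p) := by
  unfold Red' at hw ⊢
  rw [List.append_assoc] at hw ⊢
  rw [List.isChain_append] at hw ⊢
  obtain ⟨hp, hrest, hj1⟩ := hw
  rw [List.isChain_append] at hrest ⊢
  obtain ⟨hcred, hinv, hj2⟩ := hrest
  obtain ⟨m, rfl⟩ : ∃ m, n = m + 1 := ⟨n - 1, by omega⟩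
  refine ⟨hp, ⟨red'_LP hc hcred hcyc _, hinv, ?_⟩, ?_⟩
  · rw [LP_getLast? hc]
    exact hj2
  · intro x hx y hy
    rw [List.head?_append_of_ne_nil _ (LP_ne_nil hc), LP_head? hc] at hy
    apply hj1 x hx y
    rw [List.head?_append_of_ne_nil _ hc]
    exact hy

lemma mk_LP (c : List Λ) : ∀ n, FreeGroup.mk (LP n c) = (FreeGroup.mk c) ^ n := by
  intro n
  induction n with
  | zero => rw [LP, pow_zero]; rfl
  | succ n ih => rw [LP, pow_succ', ← ih, FreeGroup.mul_mk]

lemma decomp_group (a : F3) :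
    a = FreeGroup.mk (cyc (toWord a)).1 * FreeGroup.mk (cyc (toWord a)).2 *
      (FreeGroup.mk (cyc (toWord a)).1)⁻¹ := by
  conv_lhs => rw [← FreeGroup.mk_toWord (x := a)]
  conv_lhs => rw [cyc_spec (toWord a)]
  rw [← FreeGroup.mul_mk, ← FreeGroup.mul_mk, FreeGroup.inv_mk]

lemma cyc_snd_ne_nil {a : F3} (ha : a ≠ 1) : (cyc (toWord a)).2 ≠ [] := by
  intro h
  apply ha
  have := decomp_group a
  rw [h] at this
  rw [← FreeGroup.one_eq_mk, mul_one, mul_inv_cancel] at this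
  exact this

lemma toWord_pow (a : F3) (ha : a ≠ 1) (N : ℕ) (hN : 1 ≤ N) :
    toWord (a ^ N) = (cyc (toWord a)).1 ++ LP N (cyc (toWord a)).2 ++
      invRev (cyc (toWord a)).1 := by
  set p := (cyc (toWord a)).1
  set c := (cyc (toWord a)).2
  have hc : c ≠ [] := cyc_snd_ne_nil ha
  have hred : Red' (p ++ c ++ invRev p) := by
    have := red'_toWord a
    rwa [cyc_spec (toWord a)] at this
  have hpow : a ^ N = FreeGroup.mk (p ++ LP N c ++ invRev p) := by
    conv_lhs => rw [decomp_group a]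
    rw [conj_pow, ← mk_LP, FreeGroup.inv_mk, FreeGroup.mul_mk, FreeGroup.mul_mk]
  rw [hpow]
  exact toWord_mk_of_red' (red'_assembled hred hc (cyc_cycRed (toWord a)) N hN)

end NotEchelonAux
namespace NotEchelonAux
open FreeGroup

lemma key_even {p q c : List Λ} {n : ℕ} (h : Dbl (p ++ LP n c ++ q)) (hn : 2 ≤ n)
    (hce : Even c.length) : Dbl c ∨ Dbl (c.rotate 1) := by
  rcases c with _ | ⟨c₀, c'⟩
  · exact Or.inl Dbl.nil
  by_cases hp : Even p.length
  · left
    rw [List.append_assoc] at h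
    have h2 := (h.split rfl hp).2
    obtain ⟨m, rfl⟩ : ∃ m, n = m + 1 := ⟨n - 1, by omega⟩
    rw [LP, List.append_assoc] at h2
    exact (h2.split rfl hce).1
  · right
    rw [List.rotate_cons_succ, List.rotate_zero]
    obtain ⟨m, rfl⟩ : ∃ m, n = m + 1 + 1 := ⟨n - 2, by omega⟩
    rw [LP_rot] at h
    have he : p ++ (c₀ :: (LP (m + 1) (c' ++ [c₀]) ++ c')) ++ q
        = (p ++ [c₀]) ++ ((c' ++ [c₀]) ++ (LP m (c' ++ [c₀]) ++ (c' ++ q))) := by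
      rw [LP]
      simp [List.append_assoc]
    rw [he] at h
    have hpc : Even (p ++ [c₀]).length := by
      simp only [List.length_append, List.length_cons, List.length_nil]
      rcases Nat.even_or_odd p.length with he' | ho
      · exact absurd he' hp
      · rcases ho with ⟨m, hm⟩
        exact ⟨m+1, by omega⟩
    have h2 := (h.split rfl hpc).2
    have hlen : Even (c' ++ [c₀]).length := by
      simpa [Nat.add_comm] using hce
    exact (h2.split rfl hlen).1

lemma getElem_dd {c : List Λ} {j : ℕ} (hj : j < (c ++ c).length)
    (hj2 : j % c.length < c.length) :
    (c ++ c)[j] = getElem c (j % c.length) hj2 := by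
  simp only [List.length_append] at hj
  by_cases h : j < c.length
  · rw [List.getElem_append_left h]
    congr 1
    exact (Nat.mod_eq_of_lt h).symm
  · push_neg at h
    rw [List.getElem_append_right h]
    congr 1
    have : j % c.length = j - c.length := by
      rw [Nat.mod_eq_sub_mod h, Nat.mod_eq_of_lt (by omega)]
    omega

lemma replicate_of_rel {c : List Λ} (hc : c ≠ [])
    (hrel : ∀ r (hr : r < c.length) (hr2 : (r+1) % c.length < c.length),
      getElem c r hr = getElem c ((r+1) % c.length) hr2) :
    ∃ t, c = List.replicate c.length t := by
  have hC : 0 < c.length := List.length_pos_iff.mpr hc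
  refine ⟨getElem c 0 hC, ?_⟩
  have haux : ∀ r (hr : r < c.length), getElem c r hr = getElem c 0 hC := by
    intro r
    induction r with
    | zero => intro _; rfl
    | succ r ih =>
      intro hr
      have h1 := hrel r (by omega) (Nat.mod_lt _ hC)
      simp only [Nat.mod_eq_of_lt hr] at h1
      rw [← h1]
      exact ih (by omega)
  apply List.ext_getElem
  · simp
  · intro i h1 h2
    rw [List.getElem_replicate]
    exact haux i h1

lemma odd_replicate {c : List Λ} (hodd : ¬ Even c.length) (hc : c ≠ [])
    (h : Dbl (c ++ c) ∨ Dbl ((c ++ c).rotate 1)) :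
    ∃ t, c = List.replicate c.length t := by
  have hC : 0 < c.length := List.length_pos_iff.mpr hc
  -- unified pair relations
  have hpair : ∃ s, s ≤ 1 ∧ ∀ k, k < c.length →
      getElem c ((2*k+s) % c.length) (Nat.mod_lt _ hC)
        = getElem c ((2*k+s+1) % c.length) (Nat.mod_lt _ hC) := by
    rcases h with h | h
    · refine ⟨0, by omega, ?_⟩
      intro k hk
      have hj : 2*k + 1 < (c ++ c).length := by simp; omega
      have hthis := h.getElem (2*k) (by omega) hj
      rw [getElem_dd _ (Nat.mod_lt _ hC), getElem_dd _ (Nat.mod_lt _ hC)] at hthis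
      simpa using hthis
    · refine ⟨1, le_refl 1, ?_⟩
      intro k hk
      have hlen : ((c ++ c).rotate 1).length = 2 * c.length := by simp; omega
      have hj : 2*k + 1 < ((c ++ c).rotate 1).length := by rw [hlen]; omega
      have hthis := h.getElem (2*k) (by omega) hj
      rw [List.getElem_rotate, List.getElem_rotate] at hthis
      rw [getElem_dd _ (Nat.mod_lt _ hC), getElem_dd _ (Nat.mod_lt _ hC)] at hthis
      have e1 : (2 * k + 1) % (c ++ c).length % c.length = (2*k+1) % c.length := by
        rw [List.length_append]
        exact Nat.mod_mod_of_dvd _ ⟨2, by omega⟩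
      have e2 : (2 * k + 1 + 1) % (c ++ c).length % c.length = (2*k+1+1) % c.length := by
        rw [List.length_append]
        exact Nat.mod_mod_of_dvd _ ⟨2, by omega⟩
      simp only [e1, e2] at hthis
      exact hthis
  obtain ⟨s, hs, hrel0⟩ := hpair
  have hcop : Nat.Coprime 2 c.length := by
    rw [Nat.prime_two.coprime_iff_not_dvd]
    intro hdvd
    exact hodd ((even_iff_two_dvd).mpr hdvd)
  have hsurj : ∀ r, r < c.length → ∃ k, k < c.length ∧ (2*k+s) % c.length = r := by
    have hinj : Function.Injective
        (fun k : Fin c.length => (⟨(2*k+s) % c.length, Nat.mod_lt _ hC⟩ : Fin c.length)) := by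
      intro k k' hkk
      simp only [Fin.mk.injEq] at hkk
      have h1 : (2*(k:ℕ)+s) ≡ (2*(k':ℕ)+s) [MOD c.length] := hkk
      have h2 : 2*(k:ℕ) ≡ 2*(k':ℕ) [MOD c.length] := Nat.ModEq.add_right_cancel' s h1
      have h3 : (k:ℕ) ≡ (k':ℕ) [MOD c.length] := Nat.ModEq.cancel_left_of_coprime (Nat.coprime_comm.mp hcop) h2
      have h4 : (k:ℕ) = (k':ℕ) := by
        unfold Nat.ModEq at h3
        rwa [Nat.mod_eq_of_lt k.isLt, Nat.mod_eq_of_lt k'.isLt] at h3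
      exact Fin.ext h4
    have hsur := (Finite.injective_iff_surjective).mp hinj
    intro r hr
    obtain ⟨k, hk⟩ := hsur ⟨r, hr⟩
    exact ⟨k, k.isLt, by simpa using congrArg Fin.val hk⟩
  apply replicate_of_rel hc
  intro r hr hr2
  obtain ⟨k, hk, hkr⟩ := hsurj r hr
  have hthis := hrel0 k hk
  have e3 : (2*k+s+1) % c.length = (r+1) % c.length := by
    conv_rhs => rw [← hkr]
    rw [Nat.mod_add_mod]
  simp only [hkr, e3] at hthis
  exact hthis

end NotEchelonAux
namespace NotEchelonAux
open FreeGroup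

/-! ### The parity homomorphism -/

abbrev Vp := Fin 3 → ZMod 2

def μ : F3 →* Multiplicative Vp :=
  FreeGroup.lift (fun i => Multiplicative.ofAdd (Pi.single i 1))

lemma mul_self_eq_one_Vp (a : Multiplicative Vp) : a * a = 1 := by
  have : a.toAdd + a.toAdd = 0 := by
    funext i
    exact CharTwo.add_self_eq_zero _
  calc a * a = Multiplicative.ofAdd (a.toAdd + a.toAdd) := rfl
  _ = 1 := by rw [this]; rfl

lemma Dbl.mu_eq_one {c : List Λ} (h : Dbl c) : μ (FreeGroup.mk c) = 1 := by
  induction h with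
  | nil => exact _root_.map_one μ |>.symm ▸ rfl
  | @cons t w _ ih =>
    have he : FreeGroup.mk (t :: t :: w) = FreeGroup.mk [t] * (FreeGroup.mk [t] * FreeGroup.mk w) := by
      rw [FreeGroup.mul_mk, FreeGroup.mul_mk]; rfl
    rw [he, _root_.map_mul, _root_.map_mul, ih, mul_one, mul_self_eq_one_Vp]

lemma mu_rotate (c₀ : Λ) (c' : List Λ) :
    μ (FreeGroup.mk ((c₀ :: c').rotate 1)) = μ (FreeGroup.mk (c₀ :: c')) := by
  rw [List.rotate_cons_succ, List.rotate_zero]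
  have h1 : FreeGroup.mk (c' ++ [c₀]) = FreeGroup.mk c' * FreeGroup.mk [c₀] := (FreeGroup.mul_mk).symm
  have h2 : FreeGroup.mk (c₀ :: c') = FreeGroup.mk [c₀] * FreeGroup.mk c' := by
    rw [FreeGroup.mul_mk]; rfl
  rw [h1, h2, _root_.map_mul, _root_.map_mul, mul_comm]

lemma mu_conj (p c : F3) : μ (p * c * p⁻¹) = μ c := by
  rw [_root_.map_mul, _root_.map_mul, _root_.map_inv, mul_comm, ← mul_assoc, inv_mul_cancel, one_mul]

/-! ### The action on ℤ³ -/

abbrev Ω := ℤ × ℤ × ℤ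

def pfun (a : ℤ) : ℤ := if a < 0 then -1 else 0
def qfun (a : ℤ) : ℤ := if a = 4 then -2 else 0
def rfun (b : ℤ) : ℤ := if b < 0 then 0 else -2
def sfun (b : ℤ) : ℤ := if b < 0 then -1 else 0
def tfun (c : ℤ) : ℤ := if c < 0 then -4 else 2
def ufun (c : ℤ) : ℤ := if c < 0 then 1 else -2

def σx : Equiv.Perm Ω where
  toFun := fun w => (w.1 + 1, w.2.1 + pfun w.1, w.2.2 + qfun w.1)
  invFun := fun w => (w.1 - 1, w.2.1 - pfun (w.1 - 1), w.2.2 - qfun (w.1 - 1))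
  left_inv := by intro ⟨a, b, c⟩; simp
  right_inv := by intro ⟨a, b, c⟩; simp

def σy : Equiv.Perm Ω where
  toFun := fun w => (w.1 + rfun w.2.1, w.2.1 + 1, w.2.2 + sfun w.2.1)
  invFun := fun w => (w.1 - rfun (w.2.1 - 1), w.2.1 - 1, w.2.2 - sfun (w.2.1 - 1))
  left_inv := by intro ⟨a, b, c⟩; simp
  right_inv := by intro ⟨a, b, c⟩; simp

def σz : Equiv.Perm Ω where
  toFun := fun w => (w.1 + tfun w.2.2, w.2.1 + ufun w.2.2, w.2.2 + 1)
  invFun := fun w => (w.1 - tfun (w.2.2 - 1), w.2.1 - ufun (w.2.2 - 1), w.2.2 - 1)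
  left_inv := by intro ⟨a, b, c⟩; simp
  right_inv := by intro ⟨a, b, c⟩; simp

def σs : Fin 3 → Equiv.Perm Ω := ![σx, σy, σz]

def ρ : F3 →* Equiv.Perm Ω := FreeGroup.lift σs

lemma sx_zpow_fst (M : ℤ) : ∀ w : Ω, ((σx ^ M) w).1 = w.1 + M := by
  induction M using Int.induction_on with
  | zero => intro w; simp
  | succ k ih =>
    intro w
    rw [zpow_add_one, Equiv.Perm.mul_apply, ih (σx w)]
    have h1 : (σx w).1 = w.1 + 1 := rfl
    rw [h1]; ring
  | pred k ih =>
    intro w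
    rw [zpow_sub_one, Equiv.Perm.mul_apply, ih (σx⁻¹ w)]
    have h1 : (σx⁻¹ w).1 = w.1 - 1 := rfl
    rw [h1]; ring

lemma sy_zpow_snd (M : ℤ) : ∀ w : Ω, ((σy ^ M) w).2.1 = w.2.1 + M := by
  induction M using Int.induction_on with
  | zero => intro w; simp
  | succ k ih =>
    intro w
    rw [zpow_add_one, Equiv.Perm.mul_apply, ih (σy w)]
    have h1 : (σy w).2.1 = w.2.1 + 1 := rfl
    rw [h1]; ring
  | pred k ih =>
    intro w
    rw [zpow_sub_one, Equiv.Perm.mul_apply, ih (σy⁻¹ w)]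
    have h1 : (σy⁻¹ w).2.1 = w.2.1 - 1 := rfl
    rw [h1]; ring

lemma sz_zpow_trd (M : ℤ) : ∀ w : Ω, ((σz ^ M) w).2.2 = w.2.2 + M := by
  induction M using Int.induction_on with
  | zero => intro w; simp
  | succ k ih =>
    intro w
    rw [zpow_add_one, Equiv.Perm.mul_apply, ih (σz w)]
    have h1 : (σz w).2.2 = w.2.2 + 1 := rfl
    rw [h1]; ring
  | pred k ih =>
    intro w
    rw [zpow_sub_one, Equiv.Perm.mul_apply, ih (σz⁻¹ w)]
    have h1 : (σz⁻¹ w).2.2 = w.2.2 - 1 := rfl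
    rw [h1]; ring

lemma sig_zpow_fix {i : Fin 3} {M : ℤ} {w : Ω} (h : (σs i ^ M) w = w) : M = 0 := by
  fin_cases i
  · have h' : (σx ^ M) w = w := h
    have := sx_zpow_fst M w
    rw [h'] at this
    omega
  · have h' : (σy ^ M) w = w := h
    have := sy_zpow_snd M w
    rw [h'] at this
    omega
  · have h' : (σz ^ M) w = w := h
    have := sz_zpow_trd M w
    rw [h'] at this
    omega

end NotEchelonAux
namespace NotEchelonAux
open FreeGroup

/-! ### The subgroup of elements with doubled reduced words -/

def TDbl : Subgroup F3 where
  carrier := {g | Dbl (toWord g)}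
  one_mem' := by
    show Dbl (toWord (1 : F3))
    rw [FreeGroup.toWord_one]
    exact Dbl.nil
  mul_mem' := by
    intro a b ha hb
    show Dbl (toWord (a * b))
    have he : toWord (a * b) = reduce (toWord a ++ toWord b) := by
      conv_lhs => rw [← FreeGroup.mk_toWord (x := a), ← FreeGroup.mk_toWord (x := b),
        FreeGroup.mul_mk, FreeGroup.toWord_mk]
    rw [he]
    exact Dbl.reduce_append ha (FreeGroup.reduce_toWord b) hb
  inv_mem' := by
    intro a ha
    show Dbl (toWord a⁻¹)
    rw [FreeGroup.toWord_inv]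
    exact Dbl.invRev ha

def L1 : List Λ := [(0,true),(0,true),(1,true),(1,true),(0,true),(0,true)]
def L2 : List Λ := [(1,true),(1,true),(2,true),(2,true),(1,true),(1,true)]
def L3 : List Λ := [(2,true),(2,true),(0,true),(0,true),(1,true),(1,true),(0,true),(0,true),(2,true),(2,true)]

lemma hgen1 : xx^2 * yy^2 * xx^2 = FreeGroup.mk L1 := by rfl

lemma hgen2 : yy^2 * zz^2 * yy^2 = FreeGroup.mk L2 := by rfl

lemma hgen3 : zz^2 * xx^2 * yy^2 * xx^2 * zz^2 = FreeGroup.mk L3 := by rfl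

lemma red'_L1 : Red' L1 := by unfold Red' L1; simp [List.isChain_cons_cons, NC]
lemma red'_L2 : Red' L2 := by unfold Red' L2; simp [List.isChain_cons_cons, NC]
lemma red'_L3 : Red' L3 := by unfold Red' L3; simp [List.isChain_cons_cons, NC]

lemma dbl_L1 : Dbl L1 := Dbl.cons _ (Dbl.cons _ (Dbl.cons _ Dbl.nil))
lemma dbl_L2 : Dbl L2 := Dbl.cons _ (Dbl.cons _ (Dbl.cons _ Dbl.nil))
lemma dbl_L3 : Dbl L3 := Dbl.cons _ (Dbl.cons _ (Dbl.cons _ (Dbl.cons _ (Dbl.cons _ Dbl.nil))))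

lemma hex_le_TDbl : Hex ≤ TDbl := by
  rw [Hex]
  rw [Subgroup.closure_le]
  rintro g (rfl | rfl | rfl)
  · show Dbl (toWord _)
    rw [hgen1, toWord_mk_of_red' red'_L1]
    exact dbl_L1
  · show Dbl (toWord _)
    rw [hgen2, toWord_mk_of_red' red'_L2]
    exact dbl_L2
  · show Dbl (toWord _)
    rw [hgen3, toWord_mk_of_red' red'_L3]
    exact dbl_L3

/-! ### Hex stabilizes the origin -/

def origin : Ω := ((0:ℤ), (0:ℤ), (0:ℤ))

lemma rho_xx : ρ xx = σx := by
  rw [ρ, xx, FreeGroup.lift_apply_of]; rfl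

lemma rho_yy : ρ yy = σy := by
  rw [ρ, yy, FreeGroup.lift_apply_of]; rfl

lemma rho_zz : ρ zz = σz := by
  rw [ρ, zz, FreeGroup.lift_apply_of]; rfl

lemma stab1 : ρ (xx^2 * yy^2 * xx^2) origin = origin := by
  simp only [_root_.map_mul, _root_.map_pow, rho_xx, rho_yy, rho_zz, pow_two,
    Equiv.Perm.mul_apply]
  show σx (σx (σy (σy (σx (σx origin))))) = origin
  norm_num [σx, σy, σz, pfun, qfun, rfun, sfun, tfun, ufun, origin]

lemma stab2 : ρ (yy^2 * zz^2 * yy^2) origin = origin := by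
  simp only [_root_.map_mul, _root_.map_pow, rho_xx, rho_yy, rho_zz, pow_two,
    Equiv.Perm.mul_apply]
  show σy (σy (σz (σz (σy (σy origin))))) = origin
  norm_num [σx, σy, σz, pfun, qfun, rfun, sfun, tfun, ufun, origin]

lemma stab3 : ρ (zz^2 * xx^2 * yy^2 * xx^2 * zz^2) origin = origin := by
  simp only [_root_.map_mul, _root_.map_pow, rho_xx, rho_yy, rho_zz, pow_two,
    Equiv.Perm.mul_apply]
  show σz (σz (σx (σx (σy (σy (σx (σx (σz (σz origin))))))))) = origin
  norm_num [σx, σy, σz, pfun, qfun, rfun, sfun, tfun, ufun, origin]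

def StabO : Subgroup F3 where
  carrier := {g | ρ g origin = origin}
  one_mem' := by show ρ 1 origin = origin; rw [_root_.map_one]; rfl
  mul_mem' := by
    intro a b ha hb
    show ρ (a * b) origin = origin
    rw [_root_.map_mul, Equiv.Perm.mul_apply]
    rw [show ρ b origin = origin from hb]
    exact ha
  inv_mem' := by
    intro a ha
    show ρ a⁻¹ origin = origin
    rw [_root_.map_inv]
    conv_lhs => rw [← show ρ a origin = origin from ha]
    exact (ρ a).symm_apply_apply _

lemma hex_le_StabO : Hex ≤ StabO := by
  rw [Hex, Subgroup.closure_le]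
  rintro g (rfl | rfl | rfl)
  · exact stab1
  · exact stab2
  · exact stab3

end NotEchelonAux
namespace NotEchelonAux
open FreeGroup

/-! ### rank lemmas -/

instance rk_nonempty (H : Subgroup F3) : Nonempty {S : Set F3 // Subgroup.closure S = H} :=
  ⟨⟨(H : Set F3), Subgroup.closure_eq H⟩⟩

lemma rk_bot_eq : rk (⊥ : Subgroup F3) = 0 := by
  have h := ciInf_le (f := fun S : {S : Set F3 // Subgroup.closure S = (⊥ : Subgroup F3)} =>
    Cardinal.mk S.1) (OrderBot.bddBelow _) ⟨(∅ : Set F3), Subgroup.closure_empty⟩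
  simp only [Cardinal.mk_eq_zero_iff] at h
  have h0 : Cardinal.mk (∅ : Set F3) = 0 := Cardinal.mk_emptyCollection F3
  rw [rk]
  exact le_antisymm (le_of_le_of_eq h h0) (by simp)

lemma rk_pos_of_ne_bot {H : Subgroup F3} (h : H ≠ ⊥) : 1 ≤ rk H := by
  rw [rk]
  apply le_ciInf
  rintro ⟨S, hS⟩
  rcases Set.eq_empty_or_nonempty S with rfl | hne
  · rw [Subgroup.closure_empty] at hS
    exact absurd hS.symm h
  · simp only []
    rw [Cardinal.one_le_iff_ne_zero, Cardinal.mk_ne_zero_iff]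
    exact Set.Nonempty.to_subtype hne

/-! ### pulling back additive subgroups along μ-type maps -/

def pullSub {V : Type} [AddCommGroup V] (f : F3 →* Multiplicative V) (W : AddSubgroup V) :
    Subgroup F3 where
  carrier := {g | (f g).toAdd ∈ W}
  one_mem' := by
    show (f 1).toAdd ∈ W
    rw [_root_.map_one]
    exact W.zero_mem
  mul_mem' := by
    intro a b ha hb
    show (f (a * b)).toAdd ∈ W
    rw [_root_.map_mul]
    exact W.add_mem ha hb
  inv_mem' := by
    intro a ha
    show (f a⁻¹).toAdd ∈ W
    rw [_root_.map_inv]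
    exact W.neg_mem ha

/-! ### the rank of Hex is at least 3 (mod 3 abelianisation) -/

abbrev V3 := Fin 3 → ZMod 3

def ab3 : F3 →* Multiplicative V3 :=
  FreeGroup.lift (fun i => Multiplicative.ofAdd (Pi.single i 1))

def w1 : V3 := ![1, 2, 0]
def w2 : V3 := ![0, 1, 2]
def w3 : V3 := ![1, 2, 1]

lemma ab3_g1 : (ab3 (xx^2 * yy^2 * xx^2)).toAdd = w1 := by
  simp only [_root_.map_mul, _root_.map_pow, ab3, xx, yy, zz, FreeGroup.lift_apply_of]
  funext i
  fin_cases i <;> decide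

lemma ab3_g2 : (ab3 (yy^2 * zz^2 * yy^2)).toAdd = w2 := by
  simp only [_root_.map_mul, _root_.map_pow, ab3, xx, yy, zz, FreeGroup.lift_apply_of]
  funext i
  fin_cases i <;> decide

lemma ab3_g3 : (ab3 (zz^2 * xx^2 * yy^2 * xx^2 * zz^2)).toAdd = w3 := by
  simp only [_root_.map_mul, _root_.map_pow, ab3, xx, yy, zz, FreeGroup.lift_apply_of]
  funext i
  fin_cases i <;> decide

lemma li_w : LinearIndependent (ZMod 3) ![w1, w2, w3] := by
  rw [Fintype.linearIndependent_iff]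
  decide

lemma rk_hex : (3 : Cardinal) ≤ rk Hex := by
  rw [rk]
  apply le_ciInf
  rintro ⟨S, hS⟩
  simp only []
  classical
  set sset : Set V3 := (fun g => (ab3 g).toAdd) '' S with hsset
  set W : Submodule (ZMod 3) V3 := Submodule.span (ZMod 3) sset with hW
  have hmem : ∀ g ∈ Hex, (ab3 g).toAdd ∈ W := by
    intro g hg
    have hle : Subgroup.closure S ≤ pullSub ab3 W.toAddSubgroup := by
      rw [Subgroup.closure_le]
      intro s hs
      show (ab3 s).toAdd ∈ W
      exact Submodule.subset_span ⟨s, hs, rfl⟩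
    rw [hS] at hle
    exact hle hg
  have hw1 : w1 ∈ W := ab3_g1 ▸ hmem _ (Subgroup.subset_closure (by simp [Hex]))
  have hw2 : w2 ∈ W := ab3_g2 ▸ hmem _ (Subgroup.subset_closure (by simp [Hex]))
  have hw3 : w3 ∈ W := ab3_g3 ▸ hmem _ (Subgroup.subset_closure (by simp [Hex]))
  have hmemv : ∀ i : Fin 3, (![w1, w2, w3] i) ∈ W := by
    intro i; fin_cases i <;> assumption
  have li' : LinearIndependent (ZMod 3) (fun i : Fin 3 => (⟨![w1, w2, w3] i, hmemv i⟩ : W)) := by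
    apply LinearIndependent.of_comp W.subtype
    have : (W.subtype ∘ fun i : Fin 3 => (⟨![w1, w2, w3] i, hmemv i⟩ : W)) = ![w1, w2, w3] := by
      funext i; rfl
    rw [this]
    exact li_w
  have h3 : (3 : Cardinal) ≤ Module.rank (ZMod 3) W := by
    have := li'.cardinal_le_rank
    rwa [Cardinal.mk_fintype, Fintype.card_fin] at this
    
  have h4 : Module.rank (ZMod 3) W ≤ Cardinal.mk sset := rank_span_le sset
  have h5 : Cardinal.mk sset ≤ Cardinal.mk S := Cardinal.mk_image_le
  exact le_trans h3 (le_trans h4 h5)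

end NotEchelonAux
namespace NotEchelonAux
open FreeGroup

/-! ### ordered basis facts -/

lemma closure_range_top {x : Fin 3 → F3} (hb : Function.Bijective (FreeGroup.lift x)) :
    Subgroup.closure (Set.range x) = ⊤ := by
  rw [eq_top_iff]
  intro g hg
  obtain ⟨u, rfl⟩ := hb.2 g
  clear hg
  induction u using FreeGroup.induction_on with
  | C1 => rw [_root_.map_one]; exact one_mem _
  | of i =>
    have : FreeGroup.lift x (FreeGroup.of i) = x i := FreeGroup.lift_apply_of
    rw [this]
    exact Subgroup.subset_closure ⟨i, rfl⟩
  | inv_of i hi =>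
    rw [_root_.map_inv]
    exact inv_mem hi
  | mul u v hu hv =>
    rw [_root_.map_mul]
    exact mul_mem hu hv

lemma mu_of (i : Fin 3) : (μ (FreeGroup.of i)).toAdd = Pi.single i 1 := by
  rw [μ, FreeGroup.lift_apply_of]
  rfl

lemma mu_primitive_contradiction {x : Fin 3 → F3}
    (htop : Subgroup.closure (Set.range x) = ⊤) (h : μ (x 0) = 1) : False := by
  classical
  set W : Submodule (ZMod 2) Vp :=
    Submodule.span (ZMod 2) {(μ (x 1)).toAdd, (μ (x 2)).toAdd} with hWdef
  have hall : ∀ g : F3, (μ g).toAdd ∈ W := by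
    intro g
    have hle : Subgroup.closure (Set.range x) ≤ pullSub μ W.toAddSubgroup := by
      rw [Subgroup.closure_le]
      rintro _ ⟨j, rfl⟩
      show (μ (x j)).toAdd ∈ W
      have hz : (μ (x 0)).toAdd ∈ W := by rw [h]; exact W.zero_mem
      have h1 : (μ (x 1)).toAdd ∈ W := Submodule.subset_span (by simp)
      have h2 : (μ (x 2)).toAdd ∈ W := Submodule.subset_span (by simp)
      fin_cases j
      · exact hz
      · exact h1
      · exact h2
    rw [htop] at hle
    exact hle (Subgroup.mem_top g)
  have hs : ∀ i : Fin 3, Pi.single i (1 : ZMod 2) ∈ W := by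
    intro i
    have := hall (FreeGroup.of i)
    rwa [mu_of] at this
  have htopW : W = ⊤ := by
    rw [eq_top_iff]
    have hb3 := (Pi.basisFun (ZMod 2) (Fin 3)).span_eq
    rw [← hb3]
    apply Submodule.span_le.mpr
    rintro _ ⟨i, rfl⟩
    simpa [Pi.basisFun_apply] using hs i
  have hr1 : Module.rank (ZMod 2) W ≤ 2 := by
    refine le_trans (rank_span_le _) ?_
    refine le_trans (Cardinal.mk_insert_le) ?_
    rw [Cardinal.mk_singleton]
    norm_num
  have hr2 : Module.rank (ZMod 2) W = 3 := by
    rw [htopW, rank_top, rank_fun']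
    norm_num
  rw [hr2] at hr1
  have : ¬ ((3 : Cardinal) ≤ 2) := by
    rw [show (3 : Cardinal) = ((3 : ℕ) : Cardinal) from by norm_num,
      show (2 : Cardinal) = ((2 : ℕ) : Cardinal) from by norm_num, Nat.cast_le]
    omega
  exact this hr1

/-! ### conjugates of generator powers are not in Hex -/

lemma mk_replicate_true (l : Fin 3) (C : ℕ) :
    FreeGroup.mk (List.replicate C ((l, true) : Λ)) = (FreeGroup.of l) ^ C := by
  induction C with
  | zero => rw [List.replicate_zero, pow_zero]; rfl
  | succ C ih =>
    rw [List.replicate_succ, pow_succ']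
    rw [show ((l, true) : Λ) :: List.replicate C (l, true)
      = [((l, true) : Λ)] ++ List.replicate C (l, true) from rfl]
    rw [← FreeGroup.mul_mk, ih]
    rfl

lemma mk_replicate_false (l : Fin 3) (C : ℕ) :
    FreeGroup.mk (List.replicate C ((l, false) : Λ)) = ((FreeGroup.of l) ^ C)⁻¹ := by
  rw [← mk_replicate_true, FreeGroup.inv_mk]
  congr 1
  simp [FreeGroup.invRev]

lemma rho_of (l : Fin 3) : ρ (FreeGroup.of l) = σs l := by
  rw [ρ, FreeGroup.lift_apply_of]

lemma conj_zpow_not_in_hex {g : F3} {l : Fin 3} {M : ℤ} (hM : M ≠ 0)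
    (hmem : g * (FreeGroup.of l) ^ M * g⁻¹ ∈ Hex) : False := by
  have hfix := hex_le_StabO hmem
  have : ρ (g * (FreeGroup.of l) ^ M * g⁻¹) origin = origin := hfix
  rw [_root_.map_mul, _root_.map_mul, _root_.map_inv, _root_.map_zpow, rho_of] at this
  rw [Equiv.Perm.mul_apply, Equiv.Perm.mul_apply] at this
  have h2 : (σs l ^ M) ((ρ g)⁻¹ origin) = (ρ g)⁻¹ origin := by
    apply (ρ g).injective
    rw [this]; exact (Equiv.apply_symm_apply _ _).symm
  exact hM (sig_zpow_fix h2)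

lemma replicate_case {pl : List Λ} {t : Λ} {C N : ℕ} (hC : 0 < C) (hN : 0 < N)
    (hmem : (FreeGroup.mk pl * FreeGroup.mk (List.replicate C t) * (FreeGroup.mk pl)⁻¹) ^ N ∈ Hex) :
    False := by
  obtain ⟨l, b⟩ := t
  rw [conj_pow] at hmem
  cases b
  · rw [mk_replicate_false, inv_pow, ← pow_mul] at hmem
    rw [show ((FreeGroup.of l ^ (C * N))⁻¹ : F3) = (FreeGroup.of l) ^ (-((C*N : ℕ) : ℤ)) from by
      rw [zpow_neg, zpow_natCast]] at hmem
    have hCN : (0:ℤ) < ((C*N : ℕ) : ℤ) := by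
      have : 0 < C * N := Nat.mul_pos hC hN
      exact_mod_cast this
    exact conj_zpow_not_in_hex (by omega) hmem
  · rw [mk_replicate_true, ← pow_mul] at hmem
    rw [show ((FreeGroup.of l ^ (C * N)) : F3) = (FreeGroup.of l) ^ (((C*N : ℕ) : ℤ)) from by
      rw [zpow_natCast]] at hmem
    have hCN : (0:ℤ) < ((C*N : ℕ) : ℤ) := by
      have : 0 < C * N := Nat.mul_pos hC hN
      exact_mod_cast this
    exact conj_zpow_not_in_hex (by omega) hmem

end NotEchelonAux


open NotEchelonAux

/-- `H = ⟨x²y²x², y²z²y², z²x²y²x²z²⟩` is not an echelon subgroup of `F_3`. -/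
theorem example_subgroup_not_echelon : ¬ IsEchelon Hex := by
  rintro ⟨x, hbasis, hech⟩
  have htop : Subgroup.closure (Set.range x) = ⊤ := closure_range_top hbasis
  -- stage facts
  have st0 : stage x 0 = ⊥ := by
    rw [stage]
    have he : {j : Fin 3 | (j : ℕ) < 0} = ∅ := by ext j; simp
    rw [he, Set.image_empty, Subgroup.closure_empty]
  have st3 : stage x 3 = ⊤ := by
    rw [stage]
    have he : {j : Fin 3 | (j : ℕ) < 3} = Set.univ := by
      ext j; simpa using j.isLt
    rw [he, Set.image_univ, htop]
  have st1 : stage x 1 = Subgroup.closure {x 0} := by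
    rw [stage]
    have he : {j : Fin 3 | (j : ℕ) < 1} = {0} := by
      ext j
      simp only [Set.mem_setOf_eq, Set.mem_singleton_iff, Fin.ext_iff, Fin.val_zero, Nat.lt_one_iff]
    rw [he, Set.image_singleton]
  -- the chain of echelon inequalities
  have h32 : ¬ ((3 : Cardinal) ≤ 2) := by
    rw [show (3 : Cardinal) = ((3 : ℕ) : Cardinal) from by norm_num,
      show (2 : Cardinal) = ((2 : ℕ) : Cardinal) from by norm_num, Nat.cast_le]
    omega
  have hchain : Hex ⊓ stage x 1 ≠ ⊥ := by
    intro hbot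
    have e2 := hech 2 (by norm_num)
    have e1 := hech 1 (by norm_num)
    rw [hbot, rk_bot_eq, zero_add] at e1
    rw [show (2:ℕ) + 1 = 3 from rfl, st3, inf_top_eq] at e2
    have h3 := rk_hex
    have hle : (3 : Cardinal) ≤ 1 + 1 :=
      le_trans h3 (le_trans e2 (add_le_add_left e1 1))
    rw [one_add_one_eq_two] at hle
    exact h32 hle
  obtain hb | ⟨g, hgmem, hgne⟩ := Subgroup.bot_or_exists_ne_one (Hex ⊓ stage x 1)
  · exact hchain hb
  rw [Subgroup.mem_inf, st1] at hgmem
  obtain ⟨hgH, hgs⟩ := hgmem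
  rw [Subgroup.mem_closure_singleton] at hgs
  obtain ⟨n, hn⟩ := hgs
  have hn0 : n ≠ 0 := by
    rintro rfl
    rw [zpow_zero] at hn
    exact hgne hn.symm
  set a : F3 := x 0 with ha
  have ha1 : a ≠ 1 := by
    intro h
    apply hgne
    rw [← hn, h, one_zpow]
  set N : ℕ := 4 * n.natAbs with hNdef
  have habs : 0 < n.natAbs := Int.natAbs_pos.mpr hn0
  have hN4 : 4 ≤ N := by omega
  have haN : a ^ N ∈ Hex := by
    have hpow : a ^ N = (a ^ n.natAbs) ^ 4 := by
      rw [← pow_mul, hNdef, Nat.mul_comm]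
    rcases Int.natAbs_eq n with he | he
    · have hg : a ^ n.natAbs = g := by
        rw [← hn]
        conv_rhs => rw [he]
        exact (zpow_natCast a n.natAbs).symm
      rw [hpow, hg]
      exact pow_mem hgH 4
    · have hg : a ^ n.natAbs = g⁻¹ := by
        rw [← hn]
        conv_rhs => rw [he]
        rw [zpow_neg, inv_inv, zpow_natCast]
      rw [hpow, hg]
      exact pow_mem (inv_mem hgH) 4
  -- word analysis
  have hdbl : Dbl (FreeGroup.toWord (a ^ N)) := hex_le_TDbl haN
  rw [toWord_pow a ha1 N (by omega)] at hdbl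
  set p := (cyc (FreeGroup.toWord a)).1 with hpdef
  set c := (cyc (FreeGroup.toWord a)).2 with hcdef
  have hcne : c ≠ [] := cyc_snd_ne_nil ha1
  by_cases hcev : Even c.length
  · -- even case: all exponent sums of a are even, contradicting primitivity
    have hkey := key_even hdbl (by omega) hcev
    have hmu : μ (FreeGroup.mk c) = 1 := by
      rcases hkey with hk | hk
      · exact hk.mu_eq_one
      · rcases hc : c with _ | ⟨c₀, c'⟩
        · exact absurd hc hcne
        · rw [hc] at hk
          have := hk.mu_eq_one
          rw [mu_rotate] at this
          exact this
    have hmua : μ a = 1 := by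
      conv_lhs => rw [decomp_group a]
      rw [mu_conj, hmu]
    exact mu_primitive_contradiction htop hmua
  · -- odd case: a is a conjugate of a power of a generator
    have hdbl2 : Dbl (p ++ LP (2 * n.natAbs) (c ++ c) ++ FreeGroup.invRev p) := by
      rw [show (2 : ℕ) * n.natAbs = 2 * n.natAbs from rfl]
      rw [← LP_two]
      rw [show 2 * (2 * n.natAbs) = N from by omega]
      exact hdbl
    have hkey := key_even hdbl2 (by omega)
      (by rw [List.length_append]; exact Even.add_self _)
    obtain ⟨t, hct⟩ := odd_replicate hcev hcne hkey
    have haconj : a ^ N = (FreeGroup.mk p * FreeGroup.mk (List.replicate c.length t) *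
        (FreeGroup.mk p)⁻¹) ^ N := by
      rw [← hct]
      conv_lhs => rw [decomp_group a]
    exact replicate_case (List.length_pos_iff.mpr hcne) (by omega : 0 < N) (haconj ▸ haN)
end

section
/- Let F_n be the free group of finite rank n with free basis {x_1, …, x_n} and let F_{n−1} = ⟨x_1, …, x_{n−1}⟩ be the free factor generated by the first n−1 basis elements. Then for every finitely generated subgroup G of F_n one has rk(G ∩ F_{n−1}) ≤ rk(G). -/
namespace FreeFactorInert

open FreeGroup Subgroup

attribute [local instance 1100] Classical.propDecidable

universe u

variable {α : Type u}

/-- Words over the alphabet `α × Bool`. -/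
abbrev Word (α : Type u) := List (α × Bool)

/-- The coset space on which everything happens. -/
abbrev XX (G : Subgroup (FreeGroup α)) := FreeGroup α ⧸ G

/-- Right "action" of the free group on the coset space. -/
def act (G : Subgroup (FreeGroup α)) (x : XX G) (g : FreeGroup α) : XX G := g⁻¹ • x

/-- The base point. -/
def base (G : Subgroup (FreeGroup α)) : XX G := ((1 : FreeGroup α) : FreeGroup α ⧸ G)

variable {G : Subgroup (FreeGroup α)}

lemma act_act (x : XX G) (g h : FreeGroup α) : act G (act G x g) h = act G x (g * h) := by
  simp [act, mul_inv_rev, mul_smul]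

lemma act_one (x : XX G) : act G x 1 = x := by simp [act]

lemma act_base (h : FreeGroup α) : act G (base G) h = ((h⁻¹ : FreeGroup α) : FreeGroup α ⧸ G) := by
  simp [act, base]

lemma act_base_iff (g : FreeGroup α) : act G (base G) g = base G ↔ g ∈ G := by
  rw [act_base]
  unfold base
  rw [QuotientGroup.eq]
  simp

/-- The endpoint of the path reading `w` from the base point. -/
def pt (G : Subgroup (FreeGroup α)) (w : Word α) : XX G := act G (base G) (FreeGroup.mk w)

lemma pt_nil : pt G [] = base G := by
  have : FreeGroup.mk ([] : Word α) = 1 := (FreeGroup.one_eq_mk).symm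
  rw [pt, this, act_one]

lemma pt_append (u v : Word α) : pt G (u ++ v) = act G (pt G u) (FreeGroup.mk v) := by
  rw [pt, pt, act_act, FreeGroup.mul_mk]

lemma mk_single_true (a : α) : FreeGroup.mk [(a, true)] = FreeGroup.of a := rfl

lemma mk_single_false (a : α) : FreeGroup.mk [(a, false)] = (FreeGroup.of a)⁻¹ := by
  rw [← mk_single_true, FreeGroup.inv_mk]
  simp [FreeGroup.invRev]

lemma mk_single_mul_inv (a : α) (b : Bool) :
    FreeGroup.mk [(a, b)] * FreeGroup.mk [(a, !b)] = 1 := by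
  cases b <;> simp [mk_single_true, mk_single_false]

/-- The (normalized) edge crossed when reading letter `l` from vertex `x`. -/
noncomputable def estep (G : Subgroup (FreeGroup α)) (x : XX G) (l : α × Bool) : XX G × α :=
  if l.2 then (x, l.1) else (act G x (FreeGroup.of l.1)⁻¹, l.1)

lemma estep_flip (x : XX G) (a : α) (b : Bool) :
    estep G (act G x (FreeGroup.mk [(a, b)])) (a, !b) = estep G x (a, b) := by
  cases b <;>
    simp [estep, mk_single_true, mk_single_false, act_act, act_one]

/-- Tree edges determined by a set of words `M`. -/
def TE (G : Subgroup (FreeGroup α)) (M : Set (Word α)) : Set (XX G × α) :=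
  {e | ∃ q l, q ++ [l] ∈ M ∧ estep G (pt G q) l = e}

/-- Crossing word: the product of the non-tree edges crossed by the path reading `w` from `x`. -/
noncomputable def csf (G : Subgroup (FreeGroup α)) (M : Set (Word α)) :
    XX G → Word α → FreeGroup (XX G × α)
  | _, [] => 1
  | x, l :: w =>
    (if estep G x l ∈ TE G M then 1
     else if l.2 then FreeGroup.of (estep G x l) else (FreeGroup.of (estep G x l))⁻¹) *
      csf G M (act G x (FreeGroup.mk [l])) w

variable {M : Set (Word α)}

lemma csf_nil (x : XX G) : csf G M x [] = 1 := rfl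

lemma csf_cons (x : XX G) (l : α × Bool) (w : Word α) :
    csf G M x (l :: w) =
      (if estep G x l ∈ TE G M then 1
       else if l.2 then FreeGroup.of (estep G x l) else (FreeGroup.of (estep G x l))⁻¹) *
        csf G M (act G x (FreeGroup.mk [l])) w := by
  rw [csf]

lemma csf_append (u v : Word α) (x : XX G) :
    csf G M x (u ++ v) = csf G M x u * csf G M (act G x (FreeGroup.mk u)) v := by
  induction u generalizing x with
  | nil =>
    have h1 : FreeGroup.mk ([] : Word α) = 1 := (FreeGroup.one_eq_mk).symm
    simp [csf_nil, h1, act_one]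
  | cons l u' ih =>
    have hmk : FreeGroup.mk [l] * FreeGroup.mk u' = FreeGroup.mk (l :: u') := by
      rw [FreeGroup.mul_mk]; rfl
    rw [List.cons_append, csf_cons, ih, csf_cons, mul_assoc, act_act, hmk]

lemma csf_cons_cancel (x : XX G) (a : α) (b : Bool) (w : Word α) :
    csf G M x ((a, b) :: (a, !b) :: w) = csf G M x w := by
  rw [csf_cons, csf_cons, estep_flip, act_act, mk_single_mul_inv, act_one, ← mul_assoc]
  have : (if estep G x (a, b) ∈ TE G M then 1
       else if b then FreeGroup.of (estep G x (a, b)) else (FreeGroup.of (estep G x (a, b)))⁻¹) *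
      (if estep G x (a, b) ∈ TE G M then 1
       else if !b then FreeGroup.of (estep G x (a, b)) else (FreeGroup.of (estep G x (a, b)))⁻¹)
      = 1 := by
    by_cases h : estep G x (a, b) ∈ TE G M
    · simp [h]
    · cases b <;> simp [h]
  rw [this, one_mul]

lemma csf_step {w w' : Word α} (h : FreeGroup.Red.Step w w') (x : XX G) :
    csf G M x w = csf G M x w' := by
  cases h with
  | @not L₁ L₂ a b =>
    rw [csf_append, csf_append, csf_cons_cancel]

lemma csf_red {w w' : Word α} (h : FreeGroup.Red w w') (x : XX G) :
    csf G M x w = csf G M x w' := by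
  induction h with
  | refl => rfl
  | tail _ h2 ih => rw [ih, csf_step h2]

lemma csf_mk_eq {u v : Word α} (h : FreeGroup.mk u = FreeGroup.mk v) (x : XX G) :
    csf G M x u = csf G M x v := by
  have hr : FreeGroup.reduce u = FreeGroup.reduce v := by
    have := congrArg FreeGroup.toWord h
    rwa [FreeGroup.toWord_mk, FreeGroup.toWord_mk] at this
  rw [csf_red FreeGroup.reduce.red x, hr, ← csf_red FreeGroup.reduce.red x]

/-- `w` only uses letters from `L`. -/
def Lw (L : Set α) (w : Word α) : Prop := ∀ l ∈ w, l.1 ∈ L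

variable (G) in
/-- The set of vertices reachable from the base point by `L`-letter words. -/
def Vp (L : Set α) : Set (XX G) :=
  {x | ∃ h ∈ Subgroup.closure (FreeGroup.of '' L), act G (base G) h = x}

lemma base_mem_Vp {L : Set α} : base G ∈ Vp G L :=
  ⟨1, one_mem _, act_one _⟩

lemma Vp_act {L : Set α} {x : XX G} (hx : x ∈ Vp G L) {h : FreeGroup α}
    (hh : h ∈ Subgroup.closure (FreeGroup.of '' L)) : act G x h ∈ Vp G L := by
  obtain ⟨g, hg, rfl⟩ := hx
  exact ⟨g * h, mul_mem hg hh, (act_act _ _ _).symm⟩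

lemma mk_mem_closure {L : Set α} {w : Word α} (hw : Lw L w) :
    FreeGroup.mk w ∈ Subgroup.closure (FreeGroup.of '' L) := by
  induction w with
  | nil =>
    have : FreeGroup.mk ([] : Word α) = 1 := (FreeGroup.one_eq_mk).symm
    rw [this]; exact one_mem _
  | cons l w' ih =>
    have h1 : FreeGroup.mk (l :: w') = FreeGroup.mk [l] * FreeGroup.mk w' := by
      rw [FreeGroup.mul_mk]; rfl
    rw [h1]
    have hl : FreeGroup.of l.1 ∈ Subgroup.closure (FreeGroup.of '' L) :=
      Subgroup.subset_closure ⟨l.1, hw l List.mem_cons_self, rfl⟩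
    have hsingle : FreeGroup.mk [l] ∈ Subgroup.closure (FreeGroup.of '' L) := by
      rcases l with ⟨a, b⟩
      cases b
      · rw [mk_single_false]; exact inv_mem hl
      · rw [mk_single_true]; exact hl
    exact mul_mem hsingle (ih fun l' hl' => hw l' (List.mem_cons_of_mem _ hl'))

lemma exists_word_of_mem_closure {L : Set α} {h : FreeGroup α}
    (hh : h ∈ Subgroup.closure (FreeGroup.of '' L)) :
    ∃ w : Word α, Lw L w ∧ FreeGroup.mk w = h := by
  induction hh using Subgroup.closure_induction with
  | mem x hx =>
    obtain ⟨a, ha, rfl⟩ := hx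
    exact ⟨[(a, true)], fun l hl => by simp at hl; simp [hl, ha], mk_single_true a⟩
  | one => exact ⟨[], fun l hl => (List.not_mem_nil hl).elim, (FreeGroup.one_eq_mk).symm⟩
  | mul x y hx hy ihx ihy =>
    obtain ⟨w1, hw1, rfl⟩ := ihx
    obtain ⟨w2, hw2, rfl⟩ := ihy
    exact ⟨w1 ++ w2, fun l hl => (List.mem_append.1 hl).elim (hw1 l) (hw2 l),
      (FreeGroup.mul_mk).symm⟩
  | inv x hx ihx =>
    obtain ⟨w, hw, rfl⟩ := ihx
    refine ⟨FreeGroup.invRev w, fun l hl => ?_, (FreeGroup.inv_mk).symm⟩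
    simp only [FreeGroup.invRev, List.mem_reverse, List.mem_map] at hl
    obtain ⟨l', hl', rfl⟩ := hl
    exact hw l' hl'

lemma pt_mem_Vp {L : Set α} {w : Word α} (hw : Lw L w) : pt G w ∈ Vp G L :=
  ⟨FreeGroup.mk w, mk_mem_closure hw, rfl⟩

variable (G) in
/-- A good partial spanning tree. -/
structure Good (L : Set α) (M : Set (Word α)) : Prop where
  nil : [] ∈ M
  pre : ∀ p l, p ++ [l] ∈ M → p ∈ M
  inj : ∀ p ∈ M, ∀ q ∈ M, pt G p = pt G q → p = q
  compat : ∀ p ∈ M, pt G p ∈ Vp G L → Lw L p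

/-- Schreier generator attached to an edge. -/
noncomputable def tgen (G : Subgroup (FreeGroup α)) (sw : XX G → Word α) (e : XX G × α) :
    FreeGroup α :=
  FreeGroup.mk (sw e.1) * FreeGroup.of e.2 *
    (FreeGroup.mk (sw (act G e.1 (FreeGroup.of e.2))))⁻¹

section Tree

variable {L : Set α} {sw : XX G → Word α}
variable (hGood : Good G L M) (hswM : ∀ x, sw x ∈ M) (hswpt : ∀ x, pt G (sw x) = x)


include hGood hswM hswpt in
lemma sw_unique {p : Word α} (hp : p ∈ M) : sw (pt G p) = p :=
  hGood.inj _ (hswM _) _ hp (hswpt _)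

include hGood hswM hswpt in
lemma sw_base : sw (base G) = [] := by
  have := sw_unique hGood hswM hswpt hGood.nil
  rwa [pt_nil] at this

lemma act_inv_self' {x : XX G} {g : FreeGroup α} (h : act G (base G) g = x) :
    act G x g⁻¹ = base G := by
  rw [← h, act_act, mul_inv_cancel, act_one]

include hswpt in
lemma tgen_mem (e : XX G × α) : tgen G sw e ∈ G := by
  have hswact : ∀ x, act G (base G) (FreeGroup.mk (sw x)) = x := hswpt
  rw [← act_base_iff, tgen, ← act_act, ← act_act, hswact]
  exact act_inv_self' (hswact _)

include hGood in
lemma csf_tree {p : Word α} (hp : p ∈ M) : csf G M (base G) p = 1 := by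
  induction p using List.reverseRecOn with
  | nil => exact csf_nil _
  | append_singleton q l ih =>
    have hq : q ∈ M := hGood.pre _ _ hp
    have hTE : estep G (act G (base G) (FreeGroup.mk q)) l ∈ TE G M := ⟨q, l, hp, rfl⟩
    rw [csf_append, ih hq, one_mul, csf_cons, csf_nil, mul_one, if_pos hTE]

include hGood in
lemma csf_tree_inv {p : Word α} (hp : p ∈ M) : csf G M (pt G p) (FreeGroup.invRev p) = 1 := by
  induction p using List.reverseRecOn with
  | nil =>
    have h : FreeGroup.invRev ([] : Word α) = [] := by simp [FreeGroup.invRev]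
    rw [h]; exact csf_nil _
  | append_singleton q l ih =>
    have hq : q ∈ M := hGood.pre _ _ hp
    have hinv : FreeGroup.invRev (q ++ [l]) = (l.1, !l.2) :: FreeGroup.invRev q := by
      simp [FreeGroup.invRev]
    have hptq : pt G (q ++ [l]) = act G (pt G q) (FreeGroup.mk [l]) := pt_append _ _
    have hflip : estep G (pt G (q ++ [l])) (l.1, !l.2) = estep G (pt G q) l := by
      rcases l with ⟨a, b⟩
      rw [hptq]
      exact estep_flip _ _ _
    have hTE : estep G (pt G (q ++ [l])) (l.1, !l.2) ∈ TE G M := by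
      rw [hflip]; exact ⟨q, l, hp, rfl⟩
    have hact : act G (pt G (q ++ [l])) (FreeGroup.mk [(l.1, !l.2)]) = pt G q := by
      rcases l with ⟨a, b⟩
      rw [hptq, act_act, mk_single_mul_inv, act_one]
    rw [hinv, csf_cons, if_pos hTE, one_mul, hact, ih hq]

include hGood hswM hswpt in
lemma tgen_tree {e : XX G × α} (he : e ∈ TE G M) : tgen G sw e = 1 := by
  obtain ⟨q, l, hql, rfl⟩ := he
  have hq : q ∈ M := hGood.pre _ _ hql
  rcases l with ⟨a, b⟩
  cases b
  · -- inverse-oriented tree edge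
    have hstep : estep G (pt G q) (a, false) = (act G (pt G q) (FreeGroup.of a)⁻¹, a) := by
      simp [estep]
    have hpt : pt G (q ++ [(a, false)]) = act G (pt G q) (FreeGroup.of a)⁻¹ := by
      rw [pt_append, mk_single_false]
    have hsw1 : sw (act G (pt G q) (FreeGroup.of a)⁻¹) = q ++ [(a, false)] := by
      rw [← hpt]; exact sw_unique hGood hswM hswpt hql
    have hact : act G (act G (pt G q) (FreeGroup.of a)⁻¹) (FreeGroup.of a) = pt G q := by
      rw [act_act, inv_mul_cancel, act_one]
    have hsw2 : sw (pt G q) = q := sw_unique hGood hswM hswpt hq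
    rw [hstep, tgen]
    simp only [hact, hsw1, hsw2]
    rw [← FreeGroup.mul_mk, mk_single_false]
    group
  · -- forward-oriented tree edge
    have hstep : estep G (pt G q) (a, true) = (pt G q, a) := by simp [estep]
    have hpt : pt G (q ++ [(a, true)]) = act G (pt G q) (FreeGroup.of a) := by
      rw [pt_append, mk_single_true]
    have hsw1 : sw (act G (pt G q) (FreeGroup.of a)) = q ++ [(a, true)] := by
      rw [← hpt]; exact sw_unique hGood hswM hswpt hql
    have hsw2 : sw (pt G q) = q := sw_unique hGood hswM hswpt hq
    rw [hstep, tgen]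
    simp only [hsw1, hsw2]
    rw [← FreeGroup.mul_mk, mk_single_true]
    group

include hGood hswM hswpt in
lemma csf_tgen {e : XX G × α} (he : e ∉ TE G M) :
    csf G M (base G) (FreeGroup.toWord (tgen G sw e)) = FreeGroup.of e := by
  obtain ⟨x, a⟩ := e
  set y := act G x (FreeGroup.of a) with hy
  set u : Word α := sw x ++ (a, true) :: FreeGroup.invRev (sw y) with hu
  have hmk : FreeGroup.mk u = tgen G sw (x, a) := by
    rw [hu, ← FreeGroup.mul_mk, tgen]
    have : FreeGroup.mk ((a, true) :: FreeGroup.invRev (sw y)) =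
        FreeGroup.of a * (FreeGroup.mk (sw y))⁻¹ := by
      have h2 : ((a, true) :: FreeGroup.invRev (sw y) : Word α) =
          [(a, true)] ++ FreeGroup.invRev (sw y) := rfl
      rw [h2, ← FreeGroup.mul_mk, mk_single_true, FreeGroup.inv_mk]
    rw [this, ← mul_assoc, ← hy]
  have h1 : csf G M (base G) (FreeGroup.toWord (tgen G sw (x, a))) = csf G M (base G) u :=
    csf_mk_eq (by rw [FreeGroup.mk_toWord, hmk]) _
  have hswact : ∀ z, act G (base G) (FreeGroup.mk (sw z)) = z := hswpt
  rw [h1, hu, csf_append, csf_tree hGood (hswM x), one_mul, hswact, csf_cons]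
  have hstep : estep G x (a, true) = (x, a) := by simp [estep]
  rw [hstep, if_neg he, if_pos rfl, mk_single_true, ← hy]
  have h3 : csf G M y (FreeGroup.invRev (sw y)) = 1 := by
    have := csf_tree_inv hGood (hswM y)
    rwa [hswpt] at this
  rw [h3, mul_one]

end Tree

/-- The crossing-number retraction `G → FreeGroup (edges)`. -/
noncomputable def mu (G : Subgroup (FreeGroup α)) (M : Set (Word α)) :
    G →* FreeGroup (XX G × α) where
  toFun g := csf G M (base G) (FreeGroup.toWord (g : FreeGroup α))
  map_one' := by
    show csf G M (base G) ((((1 : G) : FreeGroup α)).toWord) = 1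
    rw [OneMemClass.coe_one, FreeGroup.toWord_one]
    exact csf_nil _
  map_mul' g h := by
    show csf G M (base G) ((↑(g * h) : FreeGroup α)).toWord =
      csf G M (base G) ((g : FreeGroup α)).toWord * csf G M (base G) ((h : FreeGroup α)).toWord
    have h1 : csf G M (base G) (FreeGroup.toWord ((↑(g * h) : FreeGroup α))) =
        csf G M (base G) (FreeGroup.toWord (g : FreeGroup α) ++
          FreeGroup.toWord (h : FreeGroup α)) := by
      refine csf_mk_eq ?_ _
      rw [FreeGroup.mk_toWord, ← FreeGroup.mul_mk, FreeGroup.mk_toWord, FreeGroup.mk_toWord]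
      rfl
    rw [h1, csf_append, FreeGroup.mk_toWord, (act_base_iff _).2 g.2]

variable (G) in
/-- Edges inside the `L`-labeled part reachable from the base point. -/
def EL (L : Set α) : Set (XX G × α) := {e | e.1 ∈ Vp G L ∧ e.2 ∈ L}

section Schreier

variable {L : Set α} {sw : XX G → Word α}
variable (hGood : Good G L M) (hswM : ∀ x, sw x ∈ M) (hswpt : ∀ x, pt G (sw x) = x)

lemma schreier {g : FreeGroup α} (hg : g ∈ Subgroup.closure (FreeGroup.of '' L)) :
    ∀ x ∈ Vp G L,
      FreeGroup.mk (sw x) * g * (FreeGroup.mk (sw (act G x g)))⁻¹ ∈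
        Subgroup.closure (tgen G sw '' EL G L) := by
  induction hg using Subgroup.closure_induction with
  | mem z hz =>
    intro x hx
    obtain ⟨a, ha, rfl⟩ := hz
    exact Subgroup.subset_closure ⟨(x, a), ⟨hx, ha⟩, rfl⟩
  | one =>
    intro x hx
    rw [act_one, mul_one, mul_inv_cancel]
    exact one_mem _
  | mul z w hz hw ihz ihw =>
    intro x hx
    have hxz : act G x z ∈ Vp G L := Vp_act hx hz
    have key : FreeGroup.mk (sw x) * (z * w) *
        (FreeGroup.mk (sw (act G (act G x z) w)))⁻¹ =
        (FreeGroup.mk (sw x) * z * (FreeGroup.mk (sw (act G x z)))⁻¹) *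
          (FreeGroup.mk (sw (act G x z)) * w *
            (FreeGroup.mk (sw (act G (act G x z) w)))⁻¹) := by
      group
    rw [← act_act, key]
    exact mul_mem (ihz x hx) (ihw _ hxz)
  | inv z hz ihz =>
    intro x hx
    have hxz : act G x z⁻¹ ∈ Vp G L := Vp_act hx (inv_mem hz)
    have hback : act G (act G x z⁻¹) z = x := by rw [act_act, inv_mul_cancel, act_one]
    have key : FreeGroup.mk (sw x) * z⁻¹ * (FreeGroup.mk (sw (act G x z⁻¹)))⁻¹ =
        (FreeGroup.mk (sw (act G x z⁻¹)) * z *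
          (FreeGroup.mk (sw (act G (act G x z⁻¹) z)))⁻¹)⁻¹ := by
      rw [hback]; group
    rw [key]
    exact inv_mem (ihz _ hxz)

include hGood hswM hswpt in
lemma closure_tgen_EL :
    Subgroup.closure (tgen G sw '' EL G L) =
      G ⊓ Subgroup.closure (FreeGroup.of '' L) := by
  apply le_antisymm
  · rw [Subgroup.closure_le]
    rintro _ ⟨e, he, rfl⟩
    have h2 : FreeGroup.of e.2 ∈ Subgroup.closure (FreeGroup.of '' L) :=
      Subgroup.subset_closure ⟨e.2, he.2, rfl⟩
    have h1 : FreeGroup.mk (sw e.1) ∈ Subgroup.closure (FreeGroup.of '' L) :=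
      mk_mem_closure (hGood.compat _ (hswM e.1) (by rw [hswpt]; exact he.1))
    have h3 : FreeGroup.mk (sw (act G e.1 (FreeGroup.of e.2))) ∈
        Subgroup.closure (FreeGroup.of '' L) :=
      mk_mem_closure (hGood.compat _ (hswM _) (by rw [hswpt]; exact Vp_act he.1 h2))
    exact Subgroup.mem_inf.2 ⟨tgen_mem hswpt e, mul_mem (mul_mem h1 h2) (inv_mem h3)⟩
  · intro g hg
    rw [Subgroup.mem_inf] at hg
    have h := schreier (sw := sw) hg.2 (base G) base_mem_Vp
    rwa [sw_base hGood hswM hswpt, (act_base_iff g).2 hg.1, sw_base hGood hswM hswpt,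
      ← FreeGroup.one_eq_mk, one_mul, inv_one, mul_one] at h

end Schreier

lemma concat_inj {p q : Word α} {l l' : α × Bool} (h : p ++ [l] = q ++ [l']) :
    p = q ∧ l = l' := by
  obtain ⟨h1, h2⟩ := List.append_inj' h rfl
  exact ⟨h1, by simpa using h2⟩

variable (G) in
lemma exists_good_max (L : Set α) :
    ∃ M : Set (Word α), Good G L M ∧ ∀ M', Good G L M' → M ⊆ M' → M' ⊆ M := by
  have h0 : Good G L {[]} := by
    refine ⟨rfl, ?_, ?_, ?_⟩
    · intro p l hp
      exact absurd (Set.eq_of_mem_singleton hp) (by simp)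
    · intro p hp q hq _
      exact (Set.eq_of_mem_singleton hp).trans (Set.eq_of_mem_singleton hq).symm
    · intro p hp _
      rw [Set.eq_of_mem_singleton hp]
      exact fun l hl => absurd hl List.not_mem_nil
  have hchainU : ∀ c ⊆ {M : Set (Word α) | Good G L M}, IsChain (· ⊆ ·) c → c.Nonempty →
      ∃ ub ∈ {M : Set (Word α) | Good G L M}, ∀ s ∈ c, s ⊆ ub := by
    intro c hcS hchain hcne
    refine ⟨⋃₀ c, ?_, fun s hs => Set.subset_sUnion_of_mem hs⟩
    constructor
    · obtain ⟨m, hm⟩ := hcne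
      exact ⟨m, hm, (hcS hm).nil⟩
    · rintro p l ⟨m, hm, hpm⟩
      exact ⟨m, hm, (hcS hm).pre _ _ hpm⟩
    · rintro p ⟨m1, hm1, hpm⟩ q ⟨m2, hm2, hqm⟩ hpt
      rcases hchain.total hm1 hm2 with h12 | h21
      · exact (hcS hm2).inj p (h12 hpm) q hqm hpt
      · exact (hcS hm1).inj p hpm q (h21 hqm) hpt
    · rintro p ⟨m, hm, hpm⟩ hV
      exact (hcS hm).compat p hpm hV
  obtain ⟨Mx, _, hmax⟩ := zorn_subset_nonempty {M : Set (Word α) | Good G L M} hchainU {[]} h0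
  exact ⟨Mx, hmax.1, fun M' h1 h2 => hmax.2 h1 h2⟩

section Span

variable {L : Set α}
variable (hGood : Good G L M) (hmax : ∀ M', Good G L M' → M ⊆ M' → M' ⊆ M)

include hGood hmax in
lemma pts_extend {u p : Word α} (hpM : p ∈ M) (hppt : pt G p = pt G u) (l : α × Bool)
    (hz : ¬ ∃ q ∈ M, pt G q = pt G (u ++ [l]))
    (hcompat : pt G (u ++ [l]) ∈ Vp G L → Lw L p ∧ l.1 ∈ L) : False := by
  set q := p ++ [l] with hqdef
  have hptq : pt G q = pt G (u ++ [l]) := by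
    rw [hqdef, pt_append, hppt, ← pt_append]
  have hGood' : Good G L (M ∪ {q}) := by
    constructor
    · exact Or.inl hGood.nil
    · rintro r l' (h | h)
      · exact Or.inl (hGood.pre _ _ h)
      · obtain ⟨rfl, rfl⟩ := concat_inj (Set.eq_of_mem_singleton h)
        exact Or.inl hpM
    · rintro r (hr | hr) s (hs | hs) hpt
      · exact hGood.inj r hr s hs hpt
      · exact absurd ⟨r, hr, by rw [hpt, Set.eq_of_mem_singleton hs, hptq]⟩ hz
      · exact absurd ⟨s, hs, by rw [← hpt, Set.eq_of_mem_singleton hr, hptq]⟩ hz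
      · rw [Set.eq_of_mem_singleton hr, Set.eq_of_mem_singleton hs]
    · rintro r (hr | hr) hV
      · exact hGood.compat r hr hV
      · rw [Set.eq_of_mem_singleton hr] at hV ⊢
        rw [hptq] at hV
        obtain ⟨hLp, hLl⟩ := hcompat hV
        intro l'' hl''
        rcases List.mem_append.1 hl'' with h | h
        · exact hLp l'' h
        · rw [List.mem_singleton.1 h]
          exact hLl
  have hsub : M ∪ {q} ⊆ M := hmax _ hGood' Set.subset_union_left
  exact hz ⟨q, hsub (Or.inr rfl), hptq⟩

include hGood hmax in
lemma pts_Lw : ∀ w : Word α, Lw L w → ∃ p ∈ M, pt G p = pt G w := by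
  intro w
  induction w using List.reverseRecOn with
  | nil => exact fun _ => ⟨[], hGood.nil, rfl⟩
  | append_singleton u l ih =>
    intro hw
    have hu : Lw L u := fun l' h => hw l' (List.mem_append_left _ h)
    obtain ⟨p, hpM, hppt⟩ := ih hu
    by_cases hz : ∃ q ∈ M, pt G q = pt G (u ++ [l])
    · exact hz
    · exact absurd (pts_extend hGood hmax hpM hppt l hz fun _ =>
        ⟨hGood.compat p hpM (by rw [hppt]; exact pt_mem_Vp hu), hw l (by simp)⟩) id

include hGood hmax in
lemma pts_Vp {x : XX G} (hx : x ∈ Vp G L) : ∃ p ∈ M, pt G p = x := by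
  obtain ⟨h, hh, hhx⟩ := hx
  obtain ⟨w, hw, rfl⟩ := exists_word_of_mem_closure hh
  obtain ⟨p, hp, hp2⟩ := pts_Lw hGood hmax w hw
  exact ⟨p, hp, hp2.trans hhx⟩

include hGood hmax in
lemma pts_all (x : XX G) : ∃ p ∈ M, pt G p = x := by
  have main : ∀ w : Word α, ∃ p ∈ M, pt G p = pt G w := by
    intro w
    induction w using List.reverseRecOn with
    | nil => exact ⟨[], hGood.nil, rfl⟩
    | append_singleton u l ih =>
      obtain ⟨p, hpM, hppt⟩ := ih
      by_cases hz : ∃ q ∈ M, pt G q = pt G (u ++ [l])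
      · exact hz
      · by_cases hV : pt G (u ++ [l]) ∈ Vp G L
        · exact pts_Vp hGood hmax hV
        · exact absurd (pts_extend hGood hmax hpM hppt l hz fun h => absurd h hV) id
  obtain ⟨g, rfl⟩ := QuotientGroup.mk_surjective x
  obtain ⟨p, hp, hp2⟩ := main (FreeGroup.toWord g⁻¹)
  refine ⟨p, hp, ?_⟩
  rw [hp2]
  show act G (base G) (FreeGroup.mk (FreeGroup.toWord g⁻¹)) = _
  rw [FreeGroup.mk_toWord, act_base, inv_inv]

end Span

lemma toAdd_span {β : Type v} [AddCommGroup β] [Module ℚ β] {D : Set (Multiplicative β)}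
    {z : Multiplicative β} (hz : z ∈ Subgroup.closure D) :
    z.toAdd ∈ Submodule.span ℚ (Multiplicative.toAdd '' D) := by
  induction hz using Subgroup.closure_induction with
  | mem w hw => exact Submodule.subset_span ⟨w, hw, rfl⟩
  | one => exact Submodule.zero_mem _
  | mul a b _ _ iha ihb => exact Submodule.add_mem _ iha ihb
  | inv a _ iha => exact Submodule.neg_mem _ iha

lemma rk_le {β : Type v} [Group β] {K : Subgroup β} {S : Set β}
    (h : Subgroup.closure S = K) : rk K ≤ Cardinal.mk S :=
  ciInf_le (OrderBot.bddBelow _) (⟨S, h⟩ : {S : Set β // Subgroup.closure S = K})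

lemma rk_attained {β : Type v} [Group β] (K : Subgroup β) :
    ∃ S : Set β, Subgroup.closure S = K ∧ Cardinal.mk S = rk K := by
  have hne : Nonempty {S : Set β // Subgroup.closure S = K} :=
    ⟨⟨(K : Set β), Subgroup.closure_eq K⟩⟩
  obtain ⟨i, hi⟩ :=
    csInf_mem (Set.range_nonempty fun S : {S : Set β // Subgroup.closure S = K} =>
      Cardinal.mk S.1)
  exact ⟨i.1, i.2, hi⟩

theorem rk_inf_le (G : Subgroup (FreeGroup α)) (L : Set α) :
    rk (G ⊓ Subgroup.closure (FreeGroup.of '' L)) ≤ rk G := by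
  obtain ⟨S₀, hcl, hcard⟩ := rk_attained G
  subst hcl
  set G := Subgroup.closure S₀ with hG
  obtain ⟨M, hGood, hmax⟩ := exists_good_max G L
  choose sw hswM hswpt using pts_all hGood hmax
  have hT : Subgroup.closure (tgen G sw '' (EL G L \ TE G M)) =
      G ⊓ Subgroup.closure (FreeGroup.of '' L) := by
    rw [← closure_tgen_EL hGood hswM hswpt]
    apply le_antisymm
    · exact Subgroup.closure_mono (Set.image_mono Set.diff_subset)
    · rw [Subgroup.closure_le]
      rintro _ ⟨e, he, rfl⟩
      by_cases hTE : e ∈ TE G M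
      · rw [tgen_tree hGood hswM hswpt hTE]; exact one_mem _
      · exact Subgroup.subset_closure ⟨e, ⟨he, hTE⟩, rfl⟩
  have main : Cardinal.mk ((TE G M)ᶜ : Set (XX G × α)) ≤ Cardinal.mk S₀ := by
    set Spre : Set G := (G.subtype) ⁻¹' S₀ with hSpre
    have htop : Subgroup.closure Spre = ⊤ := Subgroup.closure_preimage_eq_top S₀
    have hofmem : ∀ e : XX G × α, e ∉ TE G M →
        FreeGroup.of e ∈ Subgroup.closure ((mu G M) '' Spre) := by
      intro e he
      have h1 : mu G M ⟨tgen G sw e, tgen_mem hswpt e⟩ = FreeGroup.of e :=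
        csf_tgen hGood hswM hswpt he
      have h2 : (⟨tgen G sw e, tgen_mem hswpt e⟩ : G) ∈ Subgroup.closure Spre := by
        rw [htop]; trivial
      have h3 := Subgroup.mem_map_of_mem (mu G M) h2
      rwa [MonoidHom.map_closure, h1] at h3
    set φ : FreeGroup (XX G × α) →* Multiplicative ((XX G × α) →₀ ℚ) :=
      FreeGroup.lift (fun e => Multiplicative.ofAdd (Finsupp.single e (1 : ℚ))) with hφ
    set D : Set (Multiplicative ((XX G × α) →₀ ℚ)) := φ '' ((mu G M) '' Spre) with hD
    have hsingle : ∀ e : XX G × α, e ∉ TE G M →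
        Finsupp.single e (1 : ℚ) ∈ Submodule.span ℚ (Multiplicative.toAdd '' D) := by
      intro e he
      have h1 : φ (FreeGroup.of e) ∈ Subgroup.closure D := by
        have := Subgroup.mem_map_of_mem φ
          (Subgroup.mem_closure.1 (hofmem e he) _ Subgroup.subset_closure)
      -- simpler: map through closure
        have h2 := Subgroup.mem_map_of_mem φ (hofmem e he)
        rwa [MonoidHom.map_closure] at h2
      have h2 := toAdd_span h1
      have h3 : φ (FreeGroup.of e) = Multiplicative.ofAdd (Finsupp.single e (1 : ℚ)) := by
        rw [hφ, FreeGroup.lift_apply_of]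
      rwa [h3] at h2
    set Wsp := Submodule.span ℚ (Multiplicative.toAdd '' D) with hW
    have li : LinearIndependent ℚ (fun e : ((TE G M)ᶜ : Set (XX G × α)) =>
        Finsupp.single (e : XX G × α) (1 : ℚ)) := by
      have h0 : LinearIndependent ℚ (fun e : XX G × α => Finsupp.single e (1 : ℚ)) := by
        have := (Finsupp.basisSingleOne (R := ℚ) (ι := XX G × α)).linearIndependent
        rwa [Finsupp.coe_basisSingleOne] at this
      exact h0.comp _ Subtype.val_injective
    have liW : LinearIndependent ℚ (fun e : ((TE G M)ᶜ : Set (XX G × α)) =>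
        (⟨Finsupp.single (e : XX G × α) 1, hsingle e e.2⟩ : Wsp)) :=
      LinearIndependent.of_comp Wsp.subtype li
    calc Cardinal.mk ((TE G M)ᶜ : Set (XX G × α)) ≤ Module.rank ℚ Wsp :=
          liW.cardinal_le_rank
      _ ≤ Cardinal.mk (Multiplicative.toAdd '' D) := rank_span_le _
      _ ≤ Cardinal.mk D := Cardinal.mk_image_le
      _ ≤ Cardinal.mk ((mu G M) '' Spre) := Cardinal.mk_image_le
      _ ≤ Cardinal.mk Spre := Cardinal.mk_image_le
      _ ≤ Cardinal.mk S₀ := by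
          refine Cardinal.mk_le_of_injective (f := fun x : Spre => (⟨x.1.1, x.2⟩ : S₀)) ?_
          intro a b h
          have h' : ((a.1 : G) : FreeGroup α) = ((b.1 : G) : FreeGroup α) := by
            have := congrArg Subtype.val h
            simpa using this
          exact Subtype.ext (Subtype.ext h')
  calc rk (G ⊓ Subgroup.closure (FreeGroup.of '' L))
      ≤ Cardinal.mk (tgen G sw '' (EL G L \ TE G M) : Set (FreeGroup α)) := rk_le hT
    _ ≤ Cardinal.mk (EL G L \ TE G M : Set (XX G × α)) := Cardinal.mk_image_le
    _ ≤ Cardinal.mk ((TE G M)ᶜ : Set (XX G × α)) :=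
        Cardinal.mk_le_mk_of_subset fun e he => he.2
    _ ≤ Cardinal.mk S₀ := main
    _ = rk G := hcard

end FreeFactorInert

/-- For the free factor `F_{n-1} = ⟨x_1, …, x_{n-1}⟩` of `F_n` and any finitely generated
subgroup `G ≤ F_n`, one has `rk (G ⊓ F_{n-1}) ≤ rk G`. -/
theorem freeFactor_inter_rank_le (n : ℕ) (G : Subgroup (FreeGroup (Fin n))) (hG : G.FG) :
    rk (G ⊓ Subgroup.closure (FreeGroup.of '' {i : Fin n | (i : ℕ) < n - 1})) ≤ rk G :=
  FreeFactorInert.rk_inf_le G _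
end
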